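/- arXiv:math/0307130 — 17 statements merged into one kernel-verified Lean document; each statement's English description precedes it below -/
import Mathlib

section
/- Let n be a positive integer, let x, y_1, …, y_n be vectors in H, and let c_1, …, c_n be complex numbers. Then |∑_{i=1}^n c_i (x, y_i)|^2 ≤ ‖x‖^2 · ∑_{i=1}^n |c_i|^2 (∑_{j=1}^n |(y_i, y_j)|) ≤ ‖x‖^2 · (∑_{i=1}^n |c_i|^2) · max_{1≤i≤n} (∑_{j=1}^n |(y_i, y_j)|). (Pečarić's inequality.) -/
open Finset

private lemma aux_sum {n : ℕ} (a : Fin n → ℝ) (t : Fin n → Fin n → ℝ)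
    (ht : ∀ i j, 0 ≤ t i j) (hsymm : ∀ i j, t i j = t j i) :
    ∑ i, ∑ j, a i * a j * t i j ≤ ∑ i, a i ^ 2 * ∑ j, t i j := by
  have key : ∀ i j, a i * a j * t i j ≤ (a i ^ 2 * t i j + a j ^ 2 * t i j) / 2 := by
    intro i j
    nlinarith [ht i j, mul_nonneg (mul_nonneg (sq_nonneg (a i - a j)) (ht i j)) (ht i j),
      mul_nonneg (sq_nonneg (a i - a j)) (ht i j)]
  have swap : ∑ i, ∑ j, a j ^ 2 * t i j = ∑ i, ∑ j, a i ^ 2 * t i j := by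
    rw [Finset.sum_comm]
    exact Finset.sum_congr rfl fun i _ => Finset.sum_congr rfl fun j _ => by rw [hsymm]
  calc ∑ i, ∑ j, a i * a j * t i j
      ≤ ∑ i, ∑ j, (a i ^ 2 * t i j + a j ^ 2 * t i j) / 2 :=
        Finset.sum_le_sum fun i _ => Finset.sum_le_sum fun j _ => key i j
    _ = (∑ i, ∑ j, a i ^ 2 * t i j + ∑ i, ∑ j, a j ^ 2 * t i j) / 2 := by
        simp [add_div, Finset.sum_add_distrib, Finset.sum_div]
    _ = ∑ i, ∑ j, a i ^ 2 * t i j := by rw [swap]; ring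
    _ = ∑ i, a i ^ 2 * ∑ j, t i j := by simp [Finset.mul_sum]

theorem stmt_0 {H : Type*} [NormedAddCommGroup H] [InnerProductSpace ℂ H]
    {n : ℕ} (hn : 0 < n) (x : H) (y : Fin n → H) (c : Fin n → ℂ) :
    (‖(∑ i, c i * (inner ℂ x (y i) : ℂ))‖) ^ 2 ≤ ‖x‖ ^ 2 * (∑ i, (‖c i‖) ^ 2 * (∑ j, ‖(inner ℂ (y i) (y j) : ℂ)‖)) ∧ ‖x‖ ^ 2 * (∑ i, (‖c i‖) ^ 2 * (∑ j, ‖(inner ℂ (y i) (y j) : ℂ)‖)) ≤ ‖x‖ ^ 2 * (∑ i, (‖c i‖) ^ 2) * (Finset.univ.sup' (Finset.univ_nonempty_iff.mpr (Fin.pos_iff_nonempty.mp hn)) (fun i => (∑ j, ‖(inner ℂ (y i) (y j) : ℂ)‖))) := by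
  set a : Fin n → ℝ := fun i => ‖c i‖ with ha
  set t : Fin n → Fin n → ℝ := fun i j => ‖(inner ℂ (y i) (y j) : ℂ)‖ with htdef
  have ht : ∀ i j, 0 ≤ t i j := fun i j => norm_nonneg _
  have hsymm : ∀ i j, t i j = t j i := by
    intro i j
    simp only [htdef]
    rw [← inner_conj_symm (y j) (y i), Complex.norm_conj]
  constructor
  · -- first inequality
    set v := ∑ i, c i • y i with hv
    have h1 : (inner ℂ x v : ℂ) = ∑ i, c i * inner ℂ x (y i) := by
      simp [hv, inner_sum, inner_smul_right]
    have h2 : ‖(inner ℂ x v : ℂ)‖ ≤ ‖x‖ * ‖v‖ := by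
      simpa using norm_inner_le_norm (𝕜 := ℂ) x v
    have h3 : ‖v‖ ^ 2 ≤ ∑ i, a i ^ 2 * ∑ j, t i j := by
      have hvv : (inner ℂ v v : ℂ) = ∑ i, ∑ j, (starRingEnd ℂ) (c i) * (c j * inner ℂ (y i) (y j)) := by
        simp only [hv, sum_inner, inner_smul_left, inner_sum, inner_smul_right, Finset.mul_sum]
        rw [Finset.sum_comm]
        exact Finset.sum_congr rfl fun i _ => Finset.sum_congr rfl fun j _ => by ring
      have hnorm : ‖v‖ ^ 2 ≤ ‖(inner ℂ v v : ℂ)‖ := by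
        rw [inner_self_eq_norm_sq_to_K (𝕜 := ℂ) v]
        simp [Complex.norm_real, abs_norm]
      have habs : ‖(inner ℂ v v : ℂ)‖ ≤ ∑ i, ∑ j, a i * a j * t i j := by
        rw [hvv]
        refine (norm_sum_le _ _).trans ?_
        refine Finset.sum_le_sum fun i _ => ?_
        refine (norm_sum_le _ _).trans ?_
        refine Finset.sum_le_sum fun j _ => ?_
        simp only [norm_mul, Complex.norm_conj, ha, htdef]
        ring_nf
        exact le_refl _
      exact hnorm.trans (habs.trans (aux_sum a t ht hsymm))
    calc (‖(∑ i, c i * (inner ℂ x (y i) : ℂ))‖) ^ 2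
        = (‖(inner ℂ x v : ℂ)‖) ^ 2 := by rw [h1]
      _ ≤ (‖x‖ * ‖v‖) ^ 2 := pow_le_pow_left₀ (norm_nonneg _) h2 2
      _ = ‖x‖ ^ 2 * ‖v‖ ^ 2 := by ring
      _ ≤ ‖x‖ ^ 2 * ∑ i, a i ^ 2 * ∑ j, t i j :=
          mul_le_mul_of_nonneg_left h3 (sq_nonneg _)
  · -- second inequality
    rw [mul_assoc, Finset.sum_mul]
    refine mul_le_mul_of_nonneg_left ?_ (sq_nonneg _)
    refine Finset.sum_le_sum fun i _ => ?_
    refine mul_le_mul_of_nonneg_left ?_ (sq_nonneg _)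
    exact Finset.le_sup' (f := fun i => ∑ j, ‖(inner ℂ (y i) (y j) : ℂ)‖) (Finset.mem_univ i)
end

section
/- Let n be a positive integer and let x, y_1, …, y_n be vectors in H. Then (∑_{i=1}^n |(x, y_i)|^2)^2 ≤ ‖x‖^2 · ∑_{i=1}^n |(x, y_i)|^2 (∑_{j=1}^n |(y_i, y_j)|) ≤ ‖x‖^2 · (∑_{i=1}^n |(x, y_i)|^2) · max_{1≤i≤n} (∑_{j=1}^n |(y_i, y_j)|). -/
theorem stmt_1 {H : Type*} [NormedAddCommGroup H] [InnerProductSpace ℂ H]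
    {n : ℕ} (hn : 0 < n) (x : H) (y : Fin n → H) :
    (∑ i, (‖(inner ℂ x (y i) : ℂ)‖) ^ 2) ^ 2 ≤ ‖x‖ ^ 2 * (∑ i, (‖(inner ℂ x (y i) : ℂ)‖) ^ 2 * (∑ j, ‖(inner ℂ (y i) (y j) : ℂ)‖)) ∧ ‖x‖ ^ 2 * (∑ i, (‖(inner ℂ x (y i) : ℂ)‖) ^ 2 * (∑ j, ‖(inner ℂ (y i) (y j) : ℂ)‖)) ≤ ‖x‖ ^ 2 * (∑ i, (‖(inner ℂ x (y i) : ℂ)‖) ^ 2) * (Finset.univ.sup' (Finset.univ_nonempty_iff.mpr (Fin.pos_iff_nonempty.mp hn)) (fun i => (∑ j, ‖(inner ℂ (y i) (y j) : ℂ)‖))) := by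
  set a : Fin n → ℝ := fun i => ‖(inner ℂ x (y i) : ℂ)‖ with ha
  set b : Fin n → Fin n → ℝ := fun i j => ‖(inner ℂ (y i) (y j) : ℂ)‖ with hb
  have ha0 : ∀ i, 0 ≤ a i := fun i => norm_nonneg _
  have hb0 : ∀ i j, 0 ≤ b i j := fun i j => norm_nonneg _
  have hbsymm : ∀ i j, b i j = b j i := by
    intro i j
    simp only [hb]
    rw [← inner_conj_symm (y j) (y i), Complex.norm_conj]
  set c : Fin n → ℂ := fun i => starRingEnd ℂ (inner ℂ x (y i)) with hc
  set S : H := ∑ i, c i • y i with hS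
  have h1 : (inner ℂ x S : ℂ) = ∑ i, ((a i : ℂ))^2 := by
    rw [hS, inner_sum]
    refine Finset.sum_congr rfl fun i _ => ?_
    rw [inner_smul_right]
    show starRingEnd ℂ (inner ℂ x (y i)) * inner ℂ x (y i) = _
    rw [mul_comm, Complex.mul_conj']
  have h2 : (inner ℂ S S : ℂ) = ∑ i, ∑ j, starRingEnd ℂ (c i) * c j * inner ℂ (y i) (y j) := by
    rw [hS, sum_inner]
    refine Finset.sum_congr rfl fun i _ => ?_
    rw [inner_smul_left, inner_sum, Finset.mul_sum]
    refine Finset.sum_congr rfl fun j _ => ?_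
    rw [inner_smul_right]; ring
  -- A = abs (inner x S)
  have hA0 : 0 ≤ ∑ i, a i ^ 2 := Finset.sum_nonneg fun i _ => sq_nonneg _
  have hAbs : ‖inner ℂ x S‖ = ∑ i, a i ^ 2 := by
    rw [h1]
    rw [show (∑ i, ((a i : ℂ))^2) = ((∑ i, a i ^ 2 : ℝ) : ℂ) by push_cast; ring]
    rw [Complex.norm_of_nonneg hA0]
  -- ‖S‖² ≤ ∑∑ a i * a j * b i j
  have hSnorm : ‖S‖ ^ 2 ≤ ∑ i, ∑ j, a i * a j * b i j := by
    have : (‖S‖ : ℝ) ^ 2 = ‖inner ℂ S S‖ := by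
      rw [inner_self_eq_norm_sq_to_K (𝕜 := ℂ) S, norm_pow]; simp
    rw [this, h2]
    calc ‖(∑ i, ∑ j, starRingEnd ℂ (c i) * c j * inner ℂ (y i) (y j))‖
        ≤ ∑ i, ‖(∑ j, starRingEnd ℂ (c i) * c j * inner ℂ (y i) (y j))‖ :=
          norm_sum_le _ _
      _ ≤ ∑ i, ∑ j, ‖(starRingEnd ℂ (c i) * c j * inner ℂ (y i) (y j))‖ :=
          Finset.sum_le_sum fun i _ => norm_sum_le _ _
      _ = ∑ i, ∑ j, a i * a j * b i j := by
          refine Finset.sum_congr rfl fun i _ => Finset.sum_congr rfl fun j _ => ?_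
          rw [norm_mul, norm_mul, Complex.norm_conj]
          simp only [ha, hb, hc, Complex.norm_conj]
  -- key combinatorial inequality
  have hkey : ∑ i, ∑ j, a i * a j * b i j ≤ ∑ i, a i ^ 2 * ∑ j, b i j := by
    have e1 : ∑ i, a i ^ 2 * ∑ j, b i j = ∑ i, ∑ j, a i ^ 2 * b i j :=
      Finset.sum_congr rfl fun i _ => Finset.mul_sum _ _ _
    rw [e1]
    have swap : ∑ i, ∑ j, a j ^ 2 * b i j = ∑ i, ∑ j, a i ^ 2 * b i j := by
      rw [Finset.sum_comm]
      exact Finset.sum_congr rfl fun i _ => Finset.sum_congr rfl fun j _ => by rw [hbsymm i j]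
    have h2' : (2:ℝ) * ∑ i, ∑ j, a i * a j * b i j ≤ 2 * ∑ i, ∑ j, a i ^ 2 * b i j := by
      calc (2:ℝ) * ∑ i, ∑ j, a i * a j * b i j
          = ∑ i, ∑ j, 2 * (a i * a j * b i j) := by
            rw [Finset.mul_sum]
            exact Finset.sum_congr rfl fun i _ => Finset.mul_sum _ _ _
        _ ≤ ∑ i, ∑ j, (a i ^ 2 + a j ^ 2) * b i j := by
            refine Finset.sum_le_sum fun i _ => Finset.sum_le_sum fun j _ => ?_
            nlinarith [sq_nonneg (a i - a j), hb0 i j]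
        _ = (∑ i, ∑ j, a i ^ 2 * b i j) + ∑ i, ∑ j, a j ^ 2 * b i j := by
            rw [← Finset.sum_add_distrib]
            refine Finset.sum_congr rfl fun i _ => ?_
            rw [← Finset.sum_add_distrib]
            exact Finset.sum_congr rfl fun j _ => by ring
        _ = 2 * ∑ i, ∑ j, a i ^ 2 * b i j := by rw [swap]; ring
    linarith
  constructor
  · calc (∑ i, a i ^ 2) ^ 2 = ‖inner ℂ x S‖ ^ 2 := by rw [hAbs]
      _ ≤ (‖x‖ * ‖S‖) ^ 2 := by
          have := norm_inner_le_norm (𝕜 := ℂ) x S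
          exact pow_le_pow_left₀ (norm_nonneg _) this 2
      _ = ‖x‖ ^ 2 * ‖S‖ ^ 2 := by ring
      _ ≤ ‖x‖ ^ 2 * ∑ i, ∑ j, a i * a j * b i j :=
          mul_le_mul_of_nonneg_left hSnorm (sq_nonneg _)
      _ ≤ ‖x‖ ^ 2 * ∑ i, a i ^ 2 * ∑ j, b i j :=
          mul_le_mul_of_nonneg_left hkey (sq_nonneg _)
  · have hne : (Finset.univ : Finset (Fin n)).Nonempty := Finset.univ_nonempty_iff.mpr (Fin.pos_iff_nonempty.mp hn)
    set M := Finset.univ.sup' hne (fun i => ∑ j, b i j) with hM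
    rw [mul_assoc]
    refine mul_le_mul_of_nonneg_left ?_ (sq_nonneg _)
    rw [Finset.sum_mul]
    refine Finset.sum_le_sum fun i _ => ?_
    exact mul_le_mul_of_nonneg_left (Finset.le_sup' (fun i => ∑ j, b i j) (Finset.mem_univ i)) (sq_nonneg _)
end

section
/- Let n be a positive integer and let x, y_1, …, y_n be vectors in H. Then ∑_{i=1}^n |(x, y_i)|^2 ≤ ‖x‖^2 · max_{1≤i≤n} (∑_{j=1}^n |(y_i, y_j)|). (Bombieri's inequality.) -/
open Finset

theorem stmt_2 {H : Type*} [NormedAddCommGroup H] [InnerProductSpace ℂ H]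
    {n : ℕ} (hn : 0 < n) (x : H) (y : Fin n → H) :
    (∑ i, ‖(inner ℂ x (y i) : ℂ)‖ ^ 2) ≤ ‖x‖ ^ 2 * (Finset.univ.sup' (Finset.univ_nonempty_iff.mpr (Fin.pos_iff_nonempty.mp hn)) (fun i => (∑ j, ‖(inner ℂ (y i) (y j) : ℂ)‖))) := by
  set a : Fin n → ℝ := fun i => ‖(inner ℂ x (y i) : ℂ)‖ with ha
  set b : Fin n → Fin n → ℝ := fun i j => ‖(inner ℂ (y i) (y j) : ℂ)‖ with hb
  set S : ℝ := ∑ i, a i ^ 2 with hS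
  set hne := Finset.univ_nonempty_iff.mpr (Fin.pos_iff_nonempty.mp hn)
  set M : ℝ := Finset.univ.sup' hne (fun i => ∑ j, b i j) with hM
  have hbsymm : ∀ i j, b i j = b j i := by
    intro i j
    simp only [hb]
    rw [← inner_conj_symm (y j) (y i)]
    exact (Complex.norm_conj _).symm
  have hb0 : ∀ i j, 0 ≤ b i j := fun i j => norm_nonneg _
  have hM0 : 0 ≤ M := by
    obtain ⟨i⟩ := Fin.pos_iff_nonempty.mp hn
    refine le_trans ?_ (Finset.le_sup' (fun i => ∑ j, b i j) (Finset.mem_univ i))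
    exact Finset.sum_nonneg fun j _ => hb0 i j
  have hS0 : 0 ≤ S := Finset.sum_nonneg fun i _ => sq_nonneg _
  rcases eq_or_lt_of_le hS0 with hSz | hSpos
  · rw [← hSz]
    exact mul_nonneg (sq_nonneg _) hM0
  -- z := ∑ conj⟨x,yᵢ⟩ • yᵢ
  set z : H := ∑ i, (starRingEnd ℂ (inner ℂ x (y i))) • y i with hz
  have hxz : (inner ℂ x z : ℂ) = (S : ℂ) := by
    rw [hz, inner_sum, hS]
    push_cast
    refine Finset.sum_congr rfl fun i _ => ?_
    simp only [ha, inner_smul_right]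
    rw [← Complex.ofReal_pow, Complex.sq_norm, Complex.normSq_eq_conj_mul_self]
  have key : ∑ i, ∑ j, a i * a j * b i j ≤ S * M := by
    have step1 : ∑ i, ∑ j, a i * a j * b i j ≤ ∑ i, ∑ j, ((a i ^ 2 + a j ^ 2) / 2) * b i j := by
      refine Finset.sum_le_sum fun i _ => Finset.sum_le_sum fun j _ => ?_
      refine mul_le_mul_of_nonneg_right ?_ (hb0 i j)
      nlinarith [sq_nonneg (a i - a j)]
    have step2 : ∑ i, ∑ j, ((a i ^ 2 + a j ^ 2) / 2) * b i j = ∑ i, a i ^ 2 * ∑ j, b i j := by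
      have swap : ∑ i, ∑ j, a j ^ 2 * b i j = ∑ i, ∑ j, a i ^ 2 * b i j := by
        rw [Finset.sum_comm]
        refine Finset.sum_congr rfl fun i _ => Finset.sum_congr rfl fun j _ => ?_
        rw [hbsymm i j]
      calc ∑ i, ∑ j, ((a i ^ 2 + a j ^ 2) / 2) * b i j
          = (∑ i, ∑ j, a i ^ 2 * b i j + ∑ i, ∑ j, a j ^ 2 * b i j) / 2 := by
            rw [← Finset.sum_add_distrib]
            rw [Finset.sum_div]
            refine Finset.sum_congr rfl fun i _ => ?_
            rw [← Finset.sum_add_distrib, Finset.sum_div]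
            refine Finset.sum_congr rfl fun j _ => ?_
            ring
        _ = ∑ i, ∑ j, a i ^ 2 * b i j := by rw [swap]; ring
        _ = ∑ i, a i ^ 2 * ∑ j, b i j := by
            refine Finset.sum_congr rfl fun i _ => ?_
            rw [Finset.mul_sum]
    have step3 : ∑ i, a i ^ 2 * ∑ j, b i j ≤ ∑ i, a i ^ 2 * M :=
      Finset.sum_le_sum fun i _ => mul_le_mul_of_nonneg_left
        (Finset.le_sup' (fun i => ∑ j, b i j) (Finset.mem_univ i)) (sq_nonneg _)
    calc ∑ i, ∑ j, a i * a j * b i j ≤ ∑ i, ∑ j, ((a i ^ 2 + a j ^ 2) / 2) * b i j := step1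
      _ = ∑ i, a i ^ 2 * ∑ j, b i j := step2
      _ ≤ ∑ i, a i ^ 2 * M := step3
      _ = S * M := by rw [hS, ← Finset.sum_mul]
  have hz2 : ‖z‖ ^ 2 ≤ S * M := by
    have : ‖z‖ ^ 2 = ‖(inner ℂ z z : ℂ)‖ := by
      rw [inner_self_eq_norm_sq_to_K]
      simp [norm_pow]
    rw [this]
    have expand : (inner ℂ z z : ℂ) = ∑ i, ∑ j, (starRingEnd ℂ (starRingEnd ℂ (inner ℂ x (y i)))) * ((starRingEnd ℂ (inner ℂ x (y j))) * (inner ℂ (y i) (y j) : ℂ)) := by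
      rw [hz, sum_inner]
      refine Finset.sum_congr rfl fun i _ => ?_
      rw [inner_smul_left, inner_sum]
      rw [Finset.mul_sum]
      refine Finset.sum_congr rfl fun j _ => ?_
      rw [inner_smul_right]
    rw [expand]
    refine le_trans (le_trans (norm_sum_le _ _) ?_) key
    refine Finset.sum_le_sum fun i _ => ?_
    refine le_trans (norm_sum_le _ _) ?_
    refine Finset.sum_le_sum fun j _ => ?_
    simp only [norm_mul, Complex.norm_conj]
    exact le_of_eq (by ring)
  have hSle : S ≤ ‖x‖ * ‖z‖ := by
    have := norm_inner_le_norm (𝕜 := ℂ) x z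
    rw [hxz] at this
    rw [Complex.norm_real, Real.norm_of_nonneg hS0] at this
    exact this
  -- S^2 ≤ ‖x‖^2 * ‖z‖^2 ≤ ‖x‖^2 * (S * M)
  have hsq : S ^ 2 ≤ ‖x‖ ^ 2 * (S * M) := by
    calc S ^ 2 ≤ (‖x‖ * ‖z‖) ^ 2 := by
          exact pow_le_pow_left₀ hS0 hSle 2
      _ = ‖x‖ ^ 2 * ‖z‖ ^ 2 := by ring
      _ ≤ ‖x‖ ^ 2 * (S * M) := mul_le_mul_of_nonneg_left hz2 (sq_nonneg _)
  have : S * S ≤ (‖x‖ ^ 2 * M) * S := by nlinarith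
  exact le_of_mul_le_mul_right (by linarith [this]) hSpos
end

section
/- Let n be a positive integer, let z_1, …, z_n be vectors in H, let α_1, …, α_n be complex numbers, and let p > 1 and q satisfy 1/p + 1/q = 1. Then ‖∑_{i=1}^n α_i z_i‖^2 ≤ (∑_{i=1}^n |α_i|^p (∑_{j=1}^n |(z_i, z_j)|))^{1/p} · (∑_{i=1}^n |α_i|^q (∑_{j=1}^n |(z_i, z_j)|))^{1/q}. -/
open Finset Real

theorem stmt_3 {H : Type*} [NormedAddCommGroup H] [InnerProductSpace ℂ H]
    {n : ℕ} (hn : 0 < n) (z : Fin n → H) (a : Fin n → ℂ) (p q : ℝ) (hp : 1 < p) (hpq : 1 / p + 1 / q = 1) :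
    ‖∑ i, a i • z i‖ ^ 2 ≤ (∑ i, ‖a i‖ ^ p * (∑ j, ‖(inner ℂ (z i) (z j) : ℂ)‖)) ^ (1 / p) * (∑ i, ‖a i‖ ^ q * (∑ j, ‖(inner ℂ (z i) (z j) : ℂ)‖)) ^ (1 / q) := by
  have hpq' : p.HolderConjugate q := Real.holderConjugate_iff.mpr ⟨hp, by simpa [one_div] using hpq⟩
  set m : Fin n → Fin n → ℝ := fun i j => ‖(inner ℂ (z i) (z j) : ℂ)‖ with hm
  have hm0 : ∀ i j, 0 ≤ m i j := fun i j => norm_nonneg _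
  have hmsymm : ∀ i j, m i j = m j i := by
    intro i j
    simp only [hm]
    rw [← Complex.norm_conj, inner_conj_symm]
  -- Step 1
  have step1 : ‖∑ i, a i • z i‖ ^ 2 ≤
      ∑ i, ∑ j, ‖a i‖ * ‖a j‖ * m i j := by
    have h1 : ‖∑ i, a i • z i‖ ^ 2 =
        ‖(inner ℂ (∑ i, a i • z i) (∑ i, a i • z i) : ℂ)‖ := by
      rw [@inner_self_eq_norm_sq_to_K ℂ]
      simp [map_pow]
    rw [h1, sum_inner]
    refine le_trans (norm_sum_le _ _) (Finset.sum_le_sum fun i _ => ?_)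
    rw [inner_sum]
    refine le_trans (norm_sum_le _ _) (Finset.sum_le_sum fun j _ => ?_)
    rw [inner_smul_left, inner_smul_right]
    simp [hm, mul_assoc]
  refine step1.trans ?_
  -- Step 2: Hölder over the product index
  have hp0 : p ≠ 0 := by positivity
  have hq0 : q ≠ 0 := hpq'.symm.pos.ne'
  have key := Real.inner_le_Lp_mul_Lq_of_nonneg (Finset.univ : Finset (Fin n × Fin n))
    (f := fun ij => ‖a ij.1‖ * m ij.1 ij.2 ^ (1/p))
    (g := fun ij => ‖a ij.2‖ * m ij.1 ij.2 ^ (1/q))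
    hpq' (fun i _ => by positivity) (fun i _ => by positivity)
  have lhs_eq : ∑ ij : Fin n × Fin n,
      (‖a ij.1‖ * m ij.1 ij.2 ^ (1/p)) * (‖a ij.2‖ * m ij.1 ij.2 ^ (1/q))
      = ∑ i, ∑ j, ‖a i‖ * ‖a j‖ * m i j := by
    rw [Fintype.sum_prod_type]
    refine Finset.sum_congr rfl fun i _ => Finset.sum_congr rfl fun j _ => ?_
    rw [show (‖a i‖ * m i j ^ (1/p)) * (‖a j‖ * m i j ^ (1/q))
        = ‖a i‖ * ‖a j‖ * (m i j ^ (1/p) * m i j ^ (1/q)) by ring,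
      ← Real.rpow_add' (hm0 i j) (by rw [hpq]; norm_num), hpq, Real.rpow_one]
  have fp_eq : ∑ ij : Fin n × Fin n, (‖a ij.1‖ * m ij.1 ij.2 ^ (1/p)) ^ p
      = ∑ i, ‖a i‖ ^ p * (∑ j, m i j) := by
    rw [Fintype.sum_prod_type]
    refine Finset.sum_congr rfl fun i _ => ?_
    rw [Finset.mul_sum]
    refine Finset.sum_congr rfl fun j _ => ?_
    rw [Real.mul_rpow (norm_nonneg _) (Real.rpow_nonneg (hm0 i j) _),
      ← Real.rpow_mul (hm0 i j), one_div, inv_mul_cancel₀ hp0, Real.rpow_one]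
  have gq_eq : ∑ ij : Fin n × Fin n, (‖a ij.2‖ * m ij.1 ij.2 ^ (1/q)) ^ q
      = ∑ i, ‖a i‖ ^ q * (∑ j, m i j) := by
    rw [Fintype.sum_prod_type, Finset.sum_comm]
    refine Finset.sum_congr rfl fun j _ => ?_
    rw [Finset.mul_sum]
    refine Finset.sum_congr rfl fun i _ => ?_
    rw [Real.mul_rpow (norm_nonneg _) (Real.rpow_nonneg (hm0 i j) _),
      ← Real.rpow_mul (hm0 i j), one_div, inv_mul_cancel₀ hq0, Real.rpow_one, hmsymm i j]
  rw [lhs_eq, fp_eq, gq_eq] at key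
  exact key
end

section
/- Let n be a positive integer, let z_1, …, z_n be vectors in H, let α_1, …, α_n be complex numbers, let p > 1 and q satisfy 1/p + 1/q = 1, and let γ > 1 and δ satisfy 1/γ + 1/δ = 1. Then ‖∑_{i=1}^n α_i z_i‖^2 ≤ max_{1≤i≤n} |α_i| · (∑_{i=1}^n |α_i|^{γq})^{1/(γq)} · (∑_{i=1}^n ∑_{j=1}^n |(z_i, z_j)|)^{1/p} · (∑_{i=1}^n (∑_{j=1}^n |(z_i, z_j)|)^{δ})^{1/(δq)}. -/
open Finset

lemma aux_holder {n : ℕ} (A S : Fin n → ℝ) (hA : ∀ i, 0 ≤ A i) (hS : ∀ i, 0 ≤ S i)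
    {p q g d : ℝ} (hpq : p.HolderConjugate q) (hgd : g.HolderConjugate d) :
    ∑ i, A i * S i ≤
      (∑ i, A i ^ (g * q)) ^ (1 / (g * q)) * (∑ i, S i) ^ (1 / p)
        * (∑ i, S i ^ d) ^ (1 / (d * q)) := by
  have hq0 : 0 < q := hpq.symm.pos
  have hp0 : 0 < p := hpq.pos
  have hg0 : 0 < g := hgd.pos
  have hd0 : 0 < d := hgd.symm.pos
  have step3 : ∑ i, A i * S i ≤ (∑ i, S i) ^ (1/p) * (∑ i, A i ^ q * S i) ^ (1/q) := by
    have h := Real.inner_le_Lp_mul_Lq_of_nonneg (s := Finset.univ) hpq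
      (f := fun i => S i ^ (1/p)) (g := fun i => A i * S i ^ (1/q))
      (fun i _ => Real.rpow_nonneg (hS i) _)
      (fun i _ => mul_nonneg (hA i) (Real.rpow_nonneg (hS i) _))
    calc ∑ i, A i * S i = ∑ i, S i ^ (1/p) * (A i * S i ^ (1/q)) := by
          refine Finset.sum_congr rfl fun i _ => ?_
          rw [mul_left_comm, ← Real.rpow_add_of_nonneg (hS i) (by positivity) (by positivity),
            one_div, one_div, hpq.inv_add_inv_eq_one, Real.rpow_one]
      _ ≤ _ := h
      _ = (∑ i, S i) ^ (1/p) * (∑ i, A i ^ q * S i) ^ (1/q) := by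
          congr 2
          · refine Finset.sum_congr rfl fun i _ => ?_
            rw [← Real.rpow_mul (hS i), one_div_mul_cancel hp0.ne', Real.rpow_one]
          · refine Finset.sum_congr rfl fun i _ => ?_
            rw [Real.mul_rpow (hA i) (Real.rpow_nonneg (hS i) _), ← Real.rpow_mul (hS i),
              one_div_mul_cancel hq0.ne', Real.rpow_one]
  have step4 : ∑ i, A i ^ q * S i ≤ (∑ i, A i ^ (g*q)) ^ (1/g) * (∑ i, S i ^ d) ^ (1/d) := by
    have h := Real.inner_le_Lp_mul_Lq_of_nonneg (s := Finset.univ) hgd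
      (f := fun i => A i ^ q) (g := S)
      (fun i _ => Real.rpow_nonneg (hA i) _) (fun i _ => hS i)
    calc ∑ i, A i ^ q * S i ≤ (∑ i, (A i ^ q) ^ g) ^ (1/g) * (∑ i, S i ^ d) ^ (1/d) := h
      _ = _ := by
          congr 2
          refine Finset.sum_congr rfl fun i _ => ?_
          rw [← Real.rpow_mul (hA i), mul_comm q g]
  have hsum1 : (0:ℝ) ≤ ∑ i, A i ^ (g*q) := Finset.sum_nonneg fun i _ => Real.rpow_nonneg (hA i) _
  have hsum2 : (0:ℝ) ≤ ∑ i, S i ^ d := Finset.sum_nonneg fun i _ => Real.rpow_nonneg (hS i) _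
  calc ∑ i, A i * S i ≤ (∑ i, S i) ^ (1/p) * (∑ i, A i ^ q * S i) ^ (1/q) := step3
    _ ≤ (∑ i, S i) ^ (1/p) * ((∑ i, A i ^ (g*q)) ^ (1/g) * (∑ i, S i ^ d) ^ (1/d)) ^ (1/q) := by
        refine mul_le_mul_of_nonneg_left (Real.rpow_le_rpow ?_ step4 (by positivity)) ?_
        · exact Finset.sum_nonneg fun i _ => mul_nonneg (Real.rpow_nonneg (hA i) _) (hS i)
        · exact Real.rpow_nonneg (Finset.sum_nonneg fun i _ => hS i) _
    _ = (∑ i, A i ^ (g*q)) ^ (1/(g*q)) * (∑ i, S i) ^ (1/p) * (∑ i, S i ^ d) ^ (1/(d*q)) := by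
        rw [Real.mul_rpow (Real.rpow_nonneg hsum1 _) (Real.rpow_nonneg hsum2 _),
          ← Real.rpow_mul hsum1, ← Real.rpow_mul hsum2, div_mul_div_comm, div_mul_div_comm]
        ring

theorem stmt_5 {H : Type*} [NormedAddCommGroup H] [InnerProductSpace ℂ H]
    {n : ℕ} (hn : 0 < n) (z : Fin n → H) (a : Fin n → ℂ) (p q : ℝ) (hp : 1 < p) (hpq : 1 / p + 1 / q = 1) (g d : ℝ) (hg : 1 < g) (hgd : 1 / g + 1 / d = 1) :
    ‖∑ i, a i • z i‖ ^ 2 ≤ (Finset.univ.sup' (Finset.univ_nonempty_iff.mpr (Fin.pos_iff_nonempty.mp hn)) (fun i => ‖a i‖)) * (∑ i, (‖a i‖) ^ (g * q)) ^ (1 / (g * q)) * (∑ i, ∑ j, ‖(inner ℂ (z i) (z j) : ℂ)‖) ^ (1 / p) * (∑ i, (∑ j, ‖(inner ℂ (z i) (z j) : ℂ)‖) ^ d) ^ (1 / (d * q)) := by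
  have hpq' : p.HolderConjugate q := Real.holderConjugate_iff.mpr ⟨hp, by rw [← one_div, ← one_div]; exact hpq⟩
  have hgd' : g.HolderConjugate d := Real.holderConjugate_iff.mpr ⟨hg, by rw [← one_div, ← one_div]; exact hgd⟩
  set A : Fin n → ℝ := fun i => ‖(a i)‖ with hAdef
  set S : Fin n → ℝ := fun i => ∑ j, ‖((inner ℂ (z i) (z j) : ℂ))‖ with hSdef
  have hA : ∀ i, 0 ≤ A i := fun i => norm_nonneg _
  have hS : ∀ i, 0 ≤ S i := fun i => Finset.sum_nonneg fun j _ => norm_nonneg _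
  set ne : Finset.univ.Nonempty := Finset.univ_nonempty_iff.mpr (Fin.pos_iff_nonempty.mp hn)
  set M : ℝ := Finset.univ.sup' ne A with hMdef
  have hM : ∀ i, A i ≤ M := fun i => Finset.le_sup' A (Finset.mem_univ i)
  have hM0 : 0 ≤ M := le_trans (hA ⟨0, hn⟩) (hM ⟨0, hn⟩)
  have step1 : ‖∑ i, a i • z i‖ ^ 2 ≤
      ∑ i, ∑ j, A i * (A j * ‖((inner ℂ (z i) (z j) : ℂ))‖) := by
    rw [← inner_self_eq_norm_sq (𝕜 := ℂ)]
    calc Complex.re (inner ℂ (∑ i, a i • z i) (∑ i, a i • z i) : ℂ)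
        ≤ ‖(inner ℂ (∑ i, a i • z i) (∑ i, a i • z i) : ℂ)‖ := Complex.re_le_norm _
      _ = ‖(∑ i, ∑ j, (starRingEnd ℂ) (a i) * (a j * (inner ℂ (z i) (z j) : ℂ)))‖ := by
          rw [sum_inner]
          simp_rw [inner_sum, inner_smul_left, inner_smul_right]
      _ ≤ ∑ i, ‖(∑ j, (starRingEnd ℂ) (a i) * (a j * (inner ℂ (z i) (z j) : ℂ)))‖ :=
          norm_sum_le _ _
      _ ≤ ∑ i, ∑ j, ‖((starRingEnd ℂ) (a i) * (a j * (inner ℂ (z i) (z j) : ℂ)))‖ :=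
          Finset.sum_le_sum fun i _ => norm_sum_le _ _
      _ = ∑ i, ∑ j, A i * (A j * ‖((inner ℂ (z i) (z j) : ℂ))‖) := by
          simp [hAdef, norm_mul]
  have step2 : ∑ i, ∑ j, A i * (A j * ‖((inner ℂ (z i) (z j) : ℂ))‖)
      ≤ M * ∑ i, A i * S i := by
    rw [Finset.mul_sum]
    refine Finset.sum_le_sum fun i _ => ?_
    rw [← Finset.mul_sum]
    have h1 : ∑ j, A j * ‖((inner ℂ (z i) (z j) : ℂ))‖ ≤ M * S i := by
      rw [hSdef, Finset.mul_sum]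
      exact Finset.sum_le_sum fun j _ =>
        mul_le_mul_of_nonneg_right (hM j) (norm_nonneg _)
    calc A i * ∑ j, A j * ‖((inner ℂ (z i) (z j) : ℂ))‖ ≤ A i * (M * S i) :=
          mul_le_mul_of_nonneg_left h1 (hA i)
      _ = M * (A i * S i) := by ring
  have step5 := aux_holder A S hA hS hpq' hgd'
  calc ‖∑ i, a i • z i‖ ^ 2 ≤ M * ∑ i, A i * S i := step1.trans step2
    _ ≤ M * ((∑ i, A i ^ (g*q)) ^ (1/(g*q)) * (∑ i, S i) ^ (1/p) * (∑ i, S i ^ d) ^ (1/(d*q))) :=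
        mul_le_mul_of_nonneg_left step5 hM0
    _ = M * (∑ i, A i ^ (g*q)) ^ (1/(g*q)) * (∑ i, S i) ^ (1/p) * (∑ i, S i ^ d) ^ (1/(d*q)) := by
        ring
end

section
/- Let n be a positive integer, let z_1, …, z_n be vectors in H, let α_1, …, α_n be complex numbers, and let p > 1 and q satisfy 1/p + 1/q = 1. Then ‖∑_{i=1}^n α_i z_i‖^2 ≤ max_{1≤i≤n} |α_i| · (∑_{i=1}^n |α_i|^q)^{1/q} · (∑_{i=1}^n ∑_{j=1}^n |(z_i, z_j)|)^{1/p} · (max_{1≤i≤n} ∑_{j=1}^n |(z_i, z_j)|)^{1/q}. -/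
theorem stmt_6 {H : Type*} [NormedAddCommGroup H] [InnerProductSpace ℂ H]
    {n : ℕ} (hn : 0 < n) (z : Fin n → H) (a : Fin n → ℂ) (p q : ℝ) (hp : 1 < p) (hpq : 1 / p + 1 / q = 1) :
    ‖∑ i, a i • z i‖ ^ 2 ≤ (Finset.univ.sup' (Finset.univ_nonempty_iff.mpr (Fin.pos_iff_nonempty.mp hn)) (fun i => ‖a i‖)) * (∑ i, (‖a i‖) ^ q) ^ (1 / q) * (∑ i, ∑ j, ‖(inner ℂ (z i) (z j) : ℂ)‖) ^ (1 / p) * (Finset.univ.sup' (Finset.univ_nonempty_iff.mpr (Fin.pos_iff_nonempty.mp hn)) (fun i => (∑ j, ‖(inner ℂ (z i) (z j) : ℂ)‖))) ^ (1 / q) := by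
  have hne : (Finset.univ : Finset (Fin n)).Nonempty :=
    Finset.univ_nonempty_iff.mpr (Fin.pos_iff_nonempty.mp hn)
  have hpq' : p.HolderConjugate q := Real.holderConjugate_iff.mpr ⟨hp, by rw [← one_div, ← one_div]; exact hpq⟩
  set b : Fin n → Fin n → ℝ := fun i j => ‖(inner ℂ (z i) (z j) : ℂ)‖ with hb
  set S : Fin n → ℝ := fun i => ∑ j, b i j with hS
  set M : ℝ := Finset.univ.sup' hne (fun i => ‖a i‖) with hM
  set N : ℝ := Finset.univ.sup' hne S with hN
  have hbnn : ∀ i j, 0 ≤ b i j := fun i j => norm_nonneg _ |>.trans_eq rfl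
  have hSnn : ∀ i, 0 ≤ S i := fun i => Finset.sum_nonneg fun j _ => hbnn i j
  have hMnn : 0 ≤ M := le_trans (norm_nonneg (a ⟨0, hn⟩))
    (Finset.le_sup' (fun i => ‖a i‖) (Finset.mem_univ (⟨0, hn⟩ : Fin n)))
  have hNnn : 0 ≤ N := le_trans (hSnn ⟨0, hn⟩) (Finset.le_sup' S (Finset.mem_univ (⟨0, hn⟩ : Fin n)))
  -- Step 1
  have h1 : ‖∑ i, a i • z i‖ ^ 2 ≤ ∑ i, ∑ j, ‖a i‖ * ‖a j‖ * b i j := by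
    have e1 : (inner ℂ (∑ i, a i • z i) (∑ j, a j • z j) : ℂ)
        = ∑ i, ∑ j, (starRingEnd ℂ) (a i) * (a j * inner ℂ (z i) (z j)) := by
      rw [sum_inner]
      refine Finset.sum_congr rfl fun i _ => ?_
      rw [inner_smul_left, inner_sum, Finset.mul_sum]
      exact Finset.sum_congr rfl fun j _ => by rw [inner_smul_right]
    have e2 : ‖∑ i, a i • z i‖ ^ 2
        = ‖(inner ℂ (∑ i, a i • z i) (∑ j, a j • z j) : ℂ)‖ := by
      rw [@inner_self_eq_norm_sq_to_K ℂ]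
      rw [norm_pow]
      simp
    rw [e2, e1]
    refine le_trans (norm_sum_le _ _) (Finset.sum_le_sum fun i _ => ?_)
    refine le_trans (norm_sum_le _ _) (Finset.sum_le_sum fun j _ => ?_)
    rw [norm_mul, norm_mul, Complex.norm_conj, mul_assoc]
  -- Step 2
  have h2 : ∑ i, ∑ j, ‖a i‖ * ‖a j‖ * b i j
      ≤ M * ∑ i, ‖a i‖ * S i := by
    rw [Finset.mul_sum]
    refine Finset.sum_le_sum fun i _ => ?_
    rw [show M * (‖a i‖ * S i) = ‖a i‖ * (M * S i) by ring,
      hS, Finset.mul_sum, Finset.mul_sum]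
    refine Finset.sum_le_sum fun j _ => ?_
    rw [mul_assoc]
    refine mul_le_mul_of_nonneg_left ?_ (norm_nonneg _)
    exact mul_le_mul_of_nonneg_right (Finset.le_sup' (fun i => ‖a i‖) (Finset.mem_univ j)) (hbnn i j)
  -- Step 3: Hölder
  have h3 : ∑ i, ‖a i‖ * S i
      ≤ (∑ i, ‖a i‖ ^ q) ^ (1 / q) * (∑ i, S i ^ p) ^ (1 / p) :=
    Real.inner_le_Lp_mul_Lq_of_nonneg Finset.univ hpq'.symm
      (fun i _ => norm_nonneg _) (fun i _ => hSnn i)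
  -- Step 4
  have h4 : (∑ i, S i ^ p) ^ (1 / p) ≤ (∑ i, S i) ^ (1 / p) * N ^ (1 / q) := by
    have key : ∑ i, S i ^ p ≤ (∑ i, S i) * N ^ (p - 1) := by
      rw [Finset.sum_mul]
      refine Finset.sum_le_sum fun i _ => ?_
      calc S i ^ p = S i ^ (1 + (p - 1)) := by ring_nf
        _ = S i ^ (1 : ℝ) * S i ^ (p - 1) :=
            Real.rpow_add' (hSnn i) (by linarith)
        _ ≤ S i * N ^ (p - 1) := by
            rw [Real.rpow_one]
            exact mul_le_mul_of_nonneg_left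
              (Real.rpow_le_rpow (hSnn i) (Finset.le_sup' S (Finset.mem_univ i))
                (by linarith)) (hSnn i)
    calc (∑ i, S i ^ p) ^ (1 / p)
        ≤ ((∑ i, S i) * N ^ (p - 1)) ^ (1 / p) :=
          Real.rpow_le_rpow (Finset.sum_nonneg fun i _ => Real.rpow_nonneg (hSnn i) p)
            key (by positivity)
      _ = (∑ i, S i) ^ (1 / p) * N ^ (1 / q) := by
          rw [Real.mul_rpow (Finset.sum_nonneg fun i _ => hSnn i)
            (Real.rpow_nonneg hNnn _), ← Real.rpow_mul hNnn]
          congr 1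
          have hp0 : p ≠ 0 := by positivity
          have : 1 / q = 1 - 1 / p := by linarith
          rw [this]
          field_simp
  -- Combine
  have hA : 0 ≤ (∑ i, ‖a i‖ ^ q) ^ (1 / q) :=
    Real.rpow_nonneg (Finset.sum_nonneg fun i _ => Real.rpow_nonneg (norm_nonneg _) q) _
  calc ‖∑ i, a i • z i‖ ^ 2
      ≤ M * ∑ i, ‖a i‖ * S i := h1.trans h2
    _ ≤ M * ((∑ i, ‖a i‖ ^ q) ^ (1 / q) * (∑ i, S i ^ p) ^ (1 / p)) :=
        mul_le_mul_of_nonneg_left h3 hMnn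
    _ ≤ M * ((∑ i, ‖a i‖ ^ q) ^ (1 / q) *
        ((∑ i, S i) ^ (1 / p) * N ^ (1 / q))) :=
        mul_le_mul_of_nonneg_left (mul_le_mul_of_nonneg_left h4 hA) hMnn
    _ = M * (∑ i, ‖a i‖ ^ q) ^ (1 / q) *
        (∑ i, ∑ j, ‖(inner ℂ (z i) (z j) : ℂ)‖) ^ (1 / p) * N ^ (1 / q) := by
        ring
end

section
/- Let n be a positive integer, let z_1, …, z_n be vectors in H, let α_1, …, α_n be complex numbers, let p > 1 and q satisfy 1/p + 1/q = 1, and let α > 1 and β satisfy 1/α + 1/β = 1. Then ‖∑_{i=1}^n α_i z_i‖^2 ≤ max_{1≤i≤n} |α_i| · (∑_{i=1}^n |α_i|^{αp})^{1/(αp)} · (∑_{i=1}^n ∑_{j=1}^n |(z_i, z_j)|)^{1/q} · (∑_{i=1}^n (∑_{j=1}^n |(z_i, z_j)|)^{β})^{1/(pβ)}. -/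
theorem stmt_7 {H : Type*} [NormedAddCommGroup H] [InnerProductSpace ℂ H]
    {n : ℕ} (hn : 0 < n) (z : Fin n → H) (a : Fin n → ℂ) (p q : ℝ) (hp : 1 < p) (hpq : 1 / p + 1 / q = 1) (r s : ℝ) (hr : 1 < r) (hrs : 1 / r + 1 / s = 1) :
    ‖∑ i, a i • z i‖ ^ 2 ≤ (Finset.univ.sup' (Finset.univ_nonempty_iff.mpr (Fin.pos_iff_nonempty.mp hn)) (fun i => ‖a i‖)) * (∑ i, (‖a i‖) ^ (r * p)) ^ (1 / (r * p)) * (∑ i, ∑ j, ‖(inner ℂ (z i) (z j) : ℂ)‖) ^ (1 / q) * (∑ i, (∑ j, ‖(inner ℂ (z i) (z j) : ℂ)‖) ^ s) ^ (1 / (p * s)) := by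
  have hq : Real.HolderConjugate p q := Real.holderConjugate_iff.mpr ⟨hp, by rw [← one_div, ← one_div]; exact hpq⟩
  have hsc : Real.HolderConjugate r s := Real.holderConjugate_iff.mpr ⟨hr, by rw [← one_div, ← one_div]; exact hrs⟩
  set m : Fin n → ℝ := fun i => ∑ j, ‖(inner ℂ (z i) (z j) : ℂ)‖ with hmdef
  have hmnn : ∀ i, 0 ≤ m i := fun i => Finset.sum_nonneg fun j _ => norm_nonneg _
  set M := Finset.univ.sup' (Finset.univ_nonempty_iff.mpr (Fin.pos_iff_nonempty.mp hn)) (fun i => ‖a i‖) with hMdef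
  have hMle : ∀ i, ‖a i‖ ≤ M := fun i => Finset.le_sup' (fun i => ‖a i‖) (Finset.mem_univ i)
  have hMnn : 0 ≤ M := le_trans (norm_nonneg _) (hMle ⟨0, hn⟩)
  have hp0 : (0 : ℝ) < p := hq.pos
  have hq0 : (0 : ℝ) < q := hq.symm.pos
  have hr0 : (0 : ℝ) < r := hsc.pos
  have hs0 : (0 : ℝ) < s := hsc.symm.pos
  -- Step 1 : expand and bound the norm squared
  have step1 : ‖∑ i, a i • z i‖ ^ 2 ≤ M * ∑ i, ‖a i‖ * m i := by
    have h1 : (‖∑ i, a i • z i‖ : ℝ) ^ 2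
        = ‖((inner ℂ (∑ i, a i • z i) (∑ i, a i • z i)) : ℂ)‖ := by
      rw [inner_self_eq_norm_sq_to_K]
      simp [Complex.norm_real, ← Complex.ofReal_pow]
    rw [h1]
    have h2 : ((inner ℂ (∑ i, a i • z i) (∑ i, a i • z i)) : ℂ)
        = ∑ i, ∑ j, (starRingEnd ℂ) (a i) * (a j * (inner ℂ (z i) (z j) : ℂ)) := by
      simp only [sum_inner, inner_sum, inner_smul_left, inner_smul_right, Finset.mul_sum]
      rw [Finset.sum_comm]
      refine Finset.sum_congr rfl fun i _ => Finset.sum_congr rfl fun j _ => by ring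
    rw [h2]
    calc ‖∑ i, ∑ j, (starRingEnd ℂ) (a i) * (a j * (inner ℂ (z i) (z j) : ℂ))‖
        ≤ ∑ i, ‖∑ j, (starRingEnd ℂ) (a i) * (a j * (inner ℂ (z i) (z j) : ℂ))‖ :=
          norm_sum_le _ _
      _ ≤ ∑ i, ∑ j, ‖(starRingEnd ℂ) (a i) * (a j * (inner ℂ (z i) (z j) : ℂ))‖ :=
          Finset.sum_le_sum fun i _ => norm_sum_le _ _
      _ ≤ ∑ i, M * (‖a i‖ * m i) := by
          refine Finset.sum_le_sum fun i _ => ?_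
          have : ∀ j, ‖(starRingEnd ℂ) (a i) * (a j * (inner ℂ (z i) (z j) : ℂ))‖
              ≤ M * (‖a i‖ * ‖(inner ℂ (z i) (z j) : ℂ)‖) := by
            intro j
            rw [norm_mul, norm_mul, Complex.norm_conj]
            calc ‖a i‖ * (‖a j‖ * ‖(inner ℂ (z i) (z j) : ℂ)‖)
                ≤ ‖a i‖ * (M * ‖(inner ℂ (z i) (z j) : ℂ)‖) := by
                  gcongr
                  exact hMle j
              _ = M * (‖a i‖ * ‖(inner ℂ (z i) (z j) : ℂ)‖) := by ring
          calc ∑ j, ‖(starRingEnd ℂ) (a i) * (a j * (inner ℂ (z i) (z j) : ℂ))‖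
              ≤ ∑ j, M * (‖a i‖ * ‖(inner ℂ (z i) (z j) : ℂ)‖) :=
                Finset.sum_le_sum fun j _ => this j
            _ = M * (‖a i‖ * m i) := by
                rw [hmdef]; simp [Finset.mul_sum]
      _ = M * ∑ i, ‖a i‖ * m i := by rw [Finset.mul_sum]
  -- Step 2 : first Hölder
  have step2 : ∑ i, ‖a i‖ * m i
      ≤ (∑ i, ‖a i‖ ^ p * m i) ^ (1 / p) * (∑ i, m i) ^ (1 / q) := by
    have h := Real.inner_le_Lp_mul_Lq_of_nonneg (Finset.univ)
      (f := fun i => ‖a i‖ * m i ^ (1 / p)) (g := fun i => m i ^ (1 / q)) hq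
      (fun i _ => by positivity) (fun i _ => by positivity)
    have e1 : ∀ i : Fin n, (‖a i‖ * m i ^ (1 / p)) * m i ^ (1 / q)
        = ‖a i‖ * m i := by
      intro i
      rw [mul_assoc, ← Real.rpow_add_of_nonneg (hmnn i) (by positivity) (by positivity), hpq,
        Real.rpow_one]
    have e2 : ∀ i : Fin n, (‖a i‖ * m i ^ (1 / p)) ^ p
        = ‖a i‖ ^ p * m i := by
      intro i
      rw [Real.mul_rpow (norm_nonneg _) (by positivity), ← Real.rpow_mul (hmnn i),
        one_div_mul_cancel (ne_of_gt hp0), Real.rpow_one]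
    have e3 : ∀ i : Fin n, (m i ^ (1 / q)) ^ q = m i := by
      intro i
      rw [← Real.rpow_mul (hmnn i), one_div_mul_cancel (ne_of_gt hq0), Real.rpow_one]
    simp only [e1, e2, e3] at h
    exact h
  -- Step 3 : second Hölder
  have step3 : ∑ i, ‖a i‖ ^ p * m i
      ≤ (∑ i, ‖a i‖ ^ (r * p)) ^ (1 / r) * (∑ i, m i ^ s) ^ (1 / s) := by
    have h := Real.inner_le_Lp_mul_Lq_of_nonneg (Finset.univ)
      (f := fun i => ‖a i‖ ^ p) (g := m) hsc
      (fun i _ => by positivity) (fun i _ => hmnn i)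
    have e2 : ∀ i : Fin n, (‖a i‖ ^ p) ^ r = ‖a i‖ ^ (r * p) := by
      intro i
      rw [← Real.rpow_mul (norm_nonneg _), mul_comm p r]
    simp only [e2] at h
    exact h
  -- Combine
  have nn1 : 0 ≤ ∑ i, ‖a i‖ ^ p * m i :=
    Finset.sum_nonneg fun i _ => mul_nonneg (by positivity) (hmnn i)
  have nn2 : 0 ≤ (∑ i, ‖a i‖ ^ (r * p)) ^ (1 / r) := by positivity
  have nn3 : 0 ≤ (∑ i, m i ^ s) ^ (1 / s) := by positivity
  have step4 : (∑ i, ‖a i‖ ^ p * m i) ^ (1 / p)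
      ≤ (∑ i, ‖a i‖ ^ (r * p)) ^ (1 / (r * p)) * (∑ i, m i ^ s) ^ (1 / (p * s)) := by
    calc (∑ i, ‖a i‖ ^ p * m i) ^ (1 / p)
        ≤ ((∑ i, ‖a i‖ ^ (r * p)) ^ (1 / r) * (∑ i, m i ^ s) ^ (1 / s)) ^ (1 / p) :=
          Real.rpow_le_rpow nn1 step3 (by positivity)
      _ = (∑ i, ‖a i‖ ^ (r * p)) ^ (1 / (r * p)) * (∑ i, m i ^ s) ^ (1 / (p * s)) := by
          rw [Real.mul_rpow nn2 nn3, ← Real.rpow_mul (by positivity), ← Real.rpow_mul (by positivity),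
            div_mul_div_comm, div_mul_div_comm, one_mul, mul_comm s p]
  calc ‖∑ i, a i • z i‖ ^ 2
      ≤ M * ∑ i, ‖a i‖ * m i := step1
    _ ≤ M * ((∑ i, ‖a i‖ ^ p * m i) ^ (1 / p) * (∑ i, m i) ^ (1 / q)) := by
        gcongr
    _ ≤ M * (((∑ i, ‖a i‖ ^ (r * p)) ^ (1 / (r * p)) * (∑ i, m i ^ s) ^ (1 / (p * s))) * (∑ i, m i) ^ (1 / q)) := by
        gcongr
    _ = M * (∑ i, ‖a i‖ ^ (r * p)) ^ (1 / (r * p)) * (∑ i, m i) ^ (1 / q) * (∑ i, m i ^ s) ^ (1 / (p * s)) := by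
        ring
end

section
/- Let n be a positive integer, let z_1, …, z_n be vectors in H, let α_1, …, α_n be complex numbers, let p > 1 and q satisfy 1/p + 1/q = 1, let α > 1 and β satisfy 1/α + 1/β = 1, and let γ > 1 and δ satisfy 1/γ + 1/δ = 1. Then ‖∑_{i=1}^n α_i z_i‖^2 ≤ (∑_{i=1}^n |α_i|^{αp})^{1/(αp)} · (∑_{i=1}^n |α_i|^{γq})^{1/(γq)} · (∑_{i=1}^n (∑_{j=1}^n |(z_i, z_j)|)^{β})^{1/(pβ)} · (∑_{i=1}^n (∑_{j=1}^n |(z_i, z_j)|)^{δ})^{1/(δq)}. -/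
open Finset Real

private lemma holder_step {n : ℕ} (A C : Fin n → ℝ) (hA : ∀ i, 0 ≤ A i)
    (hC : ∀ i, 0 ≤ C i) {p r s : ℝ} (hp : 0 < p) (hrs : Real.HolderConjugate r s) :
    (∑ i, A i ^ p * C i) ^ (1 / p) ≤
      (∑ i, A i ^ (r * p)) ^ (1 / (r * p)) * (∑ i, C i ^ s) ^ (1 / (p * s)) := by
  have h1 : ∑ i, A i ^ p * C i ≤
      (∑ i, (A i ^ p) ^ r) ^ (1 / r) * (∑ i, C i ^ s) ^ (1 / s) :=
    Real.inner_le_Lp_mul_Lq_of_nonneg _ hrs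
      (fun i _ => Real.rpow_nonneg (hA i) p) (fun i _ => hC i)
  have hrw : ∀ i : Fin n, (A i ^ p) ^ r = A i ^ (r * p) := fun i => by
    rw [mul_comm, Real.rpow_mul (hA i)]
  simp only [hrw] at h1
  have h2 := Real.rpow_le_rpow (Finset.sum_nonneg fun i _ => mul_nonneg (Real.rpow_nonneg (hA i) p) (hC i)) h1 (by positivity : (0:ℝ) ≤ 1/p)
  refine h2.trans_eq ?_
  rw [Real.mul_rpow (Real.rpow_nonneg (Finset.sum_nonneg fun i _ => Real.rpow_nonneg (hA i) _) _) (Real.rpow_nonneg (Finset.sum_nonneg fun i _ => Real.rpow_nonneg (hC i) _) _),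
    ← Real.rpow_mul (Finset.sum_nonneg fun i _ => Real.rpow_nonneg (hA i) _),
    ← Real.rpow_mul (Finset.sum_nonneg fun i _ => Real.rpow_nonneg (hC i) _),
    one_div_mul_one_div, one_div_mul_one_div, mul_comm s p]

theorem stmt_8 {H : Type*} [NormedAddCommGroup H] [InnerProductSpace ℂ H]
    {n : ℕ} (hn : 0 < n) (z : Fin n → H) (a : Fin n → ℂ) (p q : ℝ) (hp : 1 < p) (hpq : 1 / p + 1 / q = 1) (r s : ℝ) (hr : 1 < r) (hrs : 1 / r + 1 / s = 1) (g d : ℝ) (hg : 1 < g) (hgd : 1 / g + 1 / d = 1) :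
    ‖∑ i, a i • z i‖ ^ 2 ≤ (∑ i, ‖a i‖ ^ (r * p)) ^ (1 / (r * p)) * (∑ i, ‖a i‖ ^ (g * q)) ^ (1 / (g * q)) * (∑ i, (∑ j, ‖(inner ℂ (z i) (z j) : ℂ)‖) ^ s) ^ (1 / (p * s)) * (∑ i, (∑ j, ‖(inner ℂ (z i) (z j) : ℂ)‖) ^ d) ^ (1 / (d * q)) := by
  have hpq' : Real.HolderConjugate p q := Real.holderConjugate_iff.mpr ⟨hp, by simpa [one_div] using hpq⟩
  have hrs' : Real.HolderConjugate r s := Real.holderConjugate_iff.mpr ⟨hr, by simpa [one_div] using hrs⟩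
  have hgd' : Real.HolderConjugate g d := Real.holderConjugate_iff.mpr ⟨hg, by simpa [one_div] using hgd⟩
  set A : Fin n → ℝ := fun i => ‖a i‖ with hAdef
  set B : Fin n → Fin n → ℝ := fun i j => ‖(inner ℂ (z i) (z j) : ℂ)‖ with hBdef
  have hA : ∀ i, 0 ≤ A i := fun i => norm_nonneg _
  have hB : ∀ i j, 0 ≤ B i j := fun i j => norm_nonneg _
  set C : Fin n → ℝ := fun i => ∑ j, B i j with hCdef
  have hC : ∀ i, 0 ≤ C i := fun i => Finset.sum_nonneg fun j _ => hB i j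
  have hBsymm : ∀ i j, B i j = B j i := fun i j => by
    simp only [hBdef, ← inner_conj_symm (z i) (z j), Complex.norm_conj]
  -- step 0
  have h0 : ‖∑ i, a i • z i‖ ^ 2 ≤ ∑ i, ∑ j, A i * A j * B i j := by
    have expand : (inner ℂ (∑ i, a i • z i) (∑ j, a j • z j) : ℂ)
        = ∑ i, ∑ j, (starRingEnd ℂ) (a i) * (a j * inner ℂ (z i) (z j)) := by
      simp only [inner_sum, sum_inner, inner_smul_left, inner_smul_right]
      rw [Finset.sum_comm]
      refine Finset.sum_congr rfl fun i _ => ?_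
      rw [Finset.mul_sum]
      exact Finset.sum_congr rfl fun j _ => by ring
    calc ‖∑ i, a i • z i‖ ^ 2
        = Complex.re (inner ℂ (∑ i, a i • z i) (∑ j, a j • z j) : ℂ) := by
          rw [← @inner_self_eq_norm_sq ℂ]; rfl
      _ ≤ ‖(inner ℂ (∑ i, a i • z i) (∑ j, a j • z j) : ℂ)‖ := Complex.re_le_norm _
      _ = ‖∑ i, ∑ j, (starRingEnd ℂ) (a i) * (a j * inner ℂ (z i) (z j))‖ := by
          rw [expand]
      _ ≤ ∑ i, ∑ j, ‖(starRingEnd ℂ) (a i) * (a j * inner ℂ (z i) (z j))‖ :=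
          (norm_sum_le _ _).trans (Finset.sum_le_sum fun i _ => norm_sum_le _ _)
      _ = ∑ i, ∑ j, A i * A j * B i j := by
          simp [norm_mul, Complex.norm_conj, mul_assoc]; rfl
  -- step 1: Hölder on the double sum
  have hkey : ∀ x : Fin n × Fin n, A x.1 * A x.2 * B x.1 x.2
      = (A x.1 * B x.1 x.2 ^ (1 / p)) * (A x.2 * B x.1 x.2 ^ (1 / q)) := by
    intro x
    have : B x.1 x.2 ^ (1/p) * B x.1 x.2 ^ (1/q) = B x.1 x.2 := by
      rw [← Real.rpow_add' (hB _ _) (by rw [hpq]; norm_num), hpq, Real.rpow_one]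
    calc A x.1 * A x.2 * B x.1 x.2 = A x.1 * A x.2 * (B x.1 x.2 ^ (1/p) * B x.1 x.2 ^ (1/q)) := by rw [this]
      _ = (A x.1 * B x.1 x.2 ^ (1 / p)) * (A x.2 * B x.1 x.2 ^ (1 / q)) := by ring
  have h1 : ∑ i, ∑ j, A i * A j * B i j ≤
      (∑ x : Fin n × Fin n, (A x.1 * B x.1 x.2 ^ (1/p)) ^ p) ^ (1/p) *
      (∑ x : Fin n × Fin n, (A x.2 * B x.1 x.2 ^ (1/q)) ^ q) ^ (1/q) := by
    have hprod : (∑ x : Fin n × Fin n, A x.1 * A x.2 * B x.1 x.2)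
        = ∑ i, ∑ j, A i * A j * B i j := Fintype.sum_prod_type _
    rw [← hprod]
    calc ∑ x : Fin n × Fin n, A x.1 * A x.2 * B x.1 x.2
        = ∑ x : Fin n × Fin n, (A x.1 * B x.1 x.2 ^ (1/p)) * (A x.2 * B x.1 x.2 ^ (1/q)) := by
          exact Finset.sum_congr rfl fun x _ => hkey x
      _ ≤ _ := Real.inner_le_Lp_mul_Lq_of_nonneg _ hpq'
          (fun x _ => mul_nonneg (hA _) (Real.rpow_nonneg (hB _ _) _))
          (fun x _ => mul_nonneg (hA _) (Real.rpow_nonneg (hB _ _) _))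
  have hXeq : ∑ x : Fin n × Fin n, (A x.1 * B x.1 x.2 ^ (1/p)) ^ p = ∑ i, A i ^ p * C i := by
    rw [Fintype.sum_prod_type]
    refine Finset.sum_congr rfl fun i _ => ?_
    rw [hCdef, Finset.mul_sum]
    refine Finset.sum_congr rfl fun j _ => ?_
    rw [Real.mul_rpow (hA _) (Real.rpow_nonneg (hB _ _) _), ← Real.rpow_mul (hB _ _),
      one_div_mul_cancel hpq'.pos.ne', Real.rpow_one]
  have hYeq : ∑ x : Fin n × Fin n, (A x.2 * B x.1 x.2 ^ (1/q)) ^ q = ∑ j, A j ^ q * C j := by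
    rw [Fintype.sum_prod_type, Finset.sum_comm]
    refine Finset.sum_congr rfl fun j _ => ?_
    rw [hCdef, Finset.mul_sum]
    refine Finset.sum_congr rfl fun i _ => ?_
    rw [Real.mul_rpow (hA _) (Real.rpow_nonneg (hB _ _) _), ← Real.rpow_mul (hB _ _),
      one_div_mul_cancel hpq'.symm.pos.ne', Real.rpow_one, hBsymm]
  -- step 2: two more Hölders
  have h2 : (∑ i, A i ^ p * C i) ^ (1/p) ≤
      (∑ i, A i ^ (r * p)) ^ (1 / (r * p)) * (∑ i, C i ^ s) ^ (1 / (p * s)) :=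
    holder_step A C hA hC hpq'.pos hrs'
  have h3 : (∑ i, A i ^ q * C i) ^ (1/q) ≤
      (∑ i, A i ^ (g * q)) ^ (1 / (g * q)) * (∑ i, C i ^ d) ^ (1 / (q * d)) :=
    holder_step A C hA hC hpq'.symm.pos hgd'
  -- combine
  have hXnn : (0:ℝ) ≤ ∑ i, A i ^ p * C i :=
    Finset.sum_nonneg fun i _ => mul_nonneg (Real.rpow_nonneg (hA _) _) (hC _)
  have hYnn : (0:ℝ) ≤ ∑ i, A i ^ q * C i :=
    Finset.sum_nonneg fun i _ => mul_nonneg (Real.rpow_nonneg (hA _) _) (hC _)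
  calc ‖∑ i, a i • z i‖ ^ 2 ≤ ∑ i, ∑ j, A i * A j * B i j := h0
    _ ≤ (∑ i, A i ^ p * C i) ^ (1/p) * (∑ i, A i ^ q * C i) ^ (1/q) := by
        rw [← hXeq, ← hYeq]; exact h1
    _ ≤ ((∑ i, A i ^ (r * p)) ^ (1 / (r * p)) * (∑ i, C i ^ s) ^ (1 / (p * s))) *
        ((∑ i, A i ^ (g * q)) ^ (1 / (g * q)) * (∑ i, C i ^ d) ^ (1 / (q * d))) := by
        exact mul_le_mul h2 h3 (Real.rpow_nonneg hYnn _)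
          (mul_nonneg (Real.rpow_nonneg (Finset.sum_nonneg fun i _ => Real.rpow_nonneg (hA _) _) _)
            (Real.rpow_nonneg (Finset.sum_nonneg fun i _ => Real.rpow_nonneg (hC _) _) _))
    _ = _ := by rw [mul_comm q d]; ring
end

section
/- Let n be a positive integer, let z_1, …, z_n be vectors in H, let α_1, …, α_n be complex numbers, and let p > 1 and q satisfy 1/p + 1/q = 1. Then ‖∑_{i=1}^n α_i z_i‖^2 ≤ (∑_{i=1}^n |α_i|^p)^{1/p} · (∑_{i=1}^n |α_i|^q)^{1/q} · max_{1≤i≤n} (∑_{j=1}^n |(z_i, z_j)|). -/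
theorem stmt_9 {H : Type*} [NormedAddCommGroup H] [InnerProductSpace ℂ H]
    {n : ℕ} (hn : 0 < n) (z : Fin n → H) (a : Fin n → ℂ) (p q : ℝ) (hp : 1 < p) (hpq : 1 / p + 1 / q = 1) :
    ‖∑ i, a i • z i‖ ^ 2 ≤ (∑ i, (‖a i‖) ^ p) ^ (1 / p) * (∑ i, (‖a i‖) ^ q) ^ (1 / q) * (Finset.univ.sup' (Finset.univ_nonempty_iff.mpr (Fin.pos_iff_nonempty.mp hn)) (fun i => (∑ j, ‖(inner ℂ (z i) (z j) : ℂ)‖))) := by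
  have hpq' : p.HolderConjugate q := ⟨by rw [inv_one, ← one_div, ← one_div]; exact hpq, by linarith, by
    have h1 : 1 / p < 1 := by rw [div_lt_one (by linarith)]; exact hp
    have h2 : 0 < 1 / q := by linarith
    exact one_div_pos.mp h2⟩
  set c : Fin n → Fin n → ℝ := fun i j => ‖(inner ℂ (z i) (z j) : ℂ)‖ with hc
  have hcnn : ∀ i j, 0 ≤ c i j := fun i j => norm_nonneg _
  have hcsymm : ∀ i j, c i j = c j i := fun i j => by
    simp only [hc]
    rw [← inner_conj_symm (z j) (z i), Complex.norm_conj]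
  set M : ℝ := Finset.univ.sup' (Finset.univ_nonempty_iff.mpr (Fin.pos_iff_nonempty.mp hn)) (fun i => ∑ j, c i j) with hM
  have hMle : ∀ i, ∑ j, c i j ≤ M := fun i => hM ▸ Finset.le_sup' (fun i => ∑ j, c i j) (Finset.mem_univ i)
  have hMnn : 0 ≤ M := le_trans (Finset.sum_nonneg fun j _ => hcnn ⟨0, hn⟩ j) (hMle ⟨0, hn⟩)
  have step1 : ‖∑ i, a i • z i‖ ^ 2 ≤ ∑ i, ∑ j, ‖a i‖ * ‖a j‖ * c i j := by
    have h1 : (‖∑ i, a i • z i‖ : ℝ) ^ 2 = ‖(inner ℂ (∑ i, a i • z i) (∑ i, a i • z i) : ℂ)‖ := by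
      rw [@inner_self_eq_norm_sq_to_K ℂ, norm_pow]
      norm_num
    have h2 : (inner ℂ (∑ i, a i • z i) (∑ i, a i • z i) : ℂ)
        = ∑ i, ∑ j, (starRingEnd ℂ) (a i) * a j * inner ℂ (z i) (z j) := by
      rw [sum_inner]
      refine Finset.sum_congr rfl fun i _ => ?_
      rw [inner_sum]
      refine Finset.sum_congr rfl fun j _ => ?_
      rw [inner_smul_left, inner_smul_right]
      ring
    rw [h1, h2]
    calc ‖∑ i, ∑ j, (starRingEnd ℂ) (a i) * a j * inner ℂ (z i) (z j)‖
        ≤ ∑ i, ‖∑ j, (starRingEnd ℂ) (a i) * a j * inner ℂ (z i) (z j)‖ := by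
          simpa using norm_sum_le Finset.univ _
      _ ≤ ∑ i, ∑ j, ‖(starRingEnd ℂ) (a i) * a j * inner ℂ (z i) (z j)‖ := by
          refine Finset.sum_le_sum fun i _ => ?_
          exact norm_sum_le Finset.univ _
      _ = ∑ i, ∑ j, ‖a i‖ * ‖a j‖ * c i j := by
          simp [hc]
  have hp0 : (0:ℝ) < p := lt_trans one_pos hp
  have hq0 : (0:ℝ) < q := hpq'.symm.pos
  set A := ∑ i, ‖a i‖ ^ p with hA
  set B := ∑ i, ‖a i‖ ^ q with hB
  have hAnn : 0 ≤ A := Finset.sum_nonneg fun i _ => Real.rpow_nonneg (norm_nonneg _) _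
  have hBnn : 0 ≤ B := Finset.sum_nonneg fun i _ => Real.rpow_nonneg (norm_nonneg _) _
  have key : ∀ (i j : Fin n), c i j ^ (1/p) * c i j ^ (1/q) = c i j := by
    intro i j
    rw [← Real.rpow_add' (hcnn i j) (by rw [hpq]; norm_num), hpq, Real.rpow_one]
  set f : Fin n × Fin n → ℝ := fun x => ‖a x.1‖ * c x.1 x.2 ^ (1/p) with hf
  set g : Fin n × Fin n → ℝ := fun x => ‖a x.2‖ * c x.1 x.2 ^ (1/q) with hg
  have hfnn : ∀ x, 0 ≤ f x := fun x => mul_nonneg (norm_nonneg _) (Real.rpow_nonneg (hcnn _ _) _)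
  have hgnn : ∀ x, 0 ≤ g x := fun x => mul_nonneg (norm_nonneg _) (Real.rpow_nonneg (hcnn _ _) _)
  have step2a : ∑ i, ∑ j, ‖a i‖ * ‖a j‖ * c i j
      = ∑ x : Fin n × Fin n, f x * g x := by
    rw [Fintype.sum_prod_type]
    refine Finset.sum_congr rfl fun i _ => Finset.sum_congr rfl fun j _ => ?_
    simp only [hf, hg]
    conv_lhs => rw [← key i j]
    ring
  have hfp : ∑ x : Fin n × Fin n, |f x| ^ p ≤ A * M := by
    have e : ∀ x : Fin n × Fin n, |f x| ^ p = ‖a x.1‖ ^ p * c x.1 x.2 := by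
      intro x
      rw [abs_of_nonneg (hfnn x), hf]
      rw [Real.mul_rpow (norm_nonneg _) (Real.rpow_nonneg (hcnn _ _) _),
        ← Real.rpow_mul (hcnn _ _), one_div, inv_mul_cancel₀ hp0.ne', Real.rpow_one]
    calc ∑ x : Fin n × Fin n, |f x| ^ p = ∑ i, ∑ j, ‖a i‖ ^ p * c i j := by
          rw [Fintype.sum_prod_type]
          exact Finset.sum_congr rfl fun i _ => Finset.sum_congr rfl fun j _ => e (i, j)
      _ = ∑ i, ‖a i‖ ^ p * ∑ j, c i j := by
          simp [Finset.mul_sum]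
      _ ≤ ∑ i, ‖a i‖ ^ p * M := by
          refine Finset.sum_le_sum fun i _ => ?_
          exact mul_le_mul_of_nonneg_left (hMle i) (Real.rpow_nonneg (norm_nonneg _) _)
      _ = A * M := by rw [hA, Finset.sum_mul]
  have hgq : ∑ x : Fin n × Fin n, |g x| ^ q ≤ B * M := by
    have e : ∀ x : Fin n × Fin n, |g x| ^ q = ‖a x.2‖ ^ q * c x.1 x.2 := by
      intro x
      rw [abs_of_nonneg (hgnn x), hg]
      rw [Real.mul_rpow (norm_nonneg _) (Real.rpow_nonneg (hcnn _ _) _),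
        ← Real.rpow_mul (hcnn _ _), one_div, inv_mul_cancel₀ hq0.ne', Real.rpow_one]
    calc ∑ x : Fin n × Fin n, |g x| ^ q = ∑ j, ∑ i, ‖a j‖ ^ q * c i j := by
          rw [Fintype.sum_prod_type, Finset.sum_comm]
          exact Finset.sum_congr rfl fun j _ => Finset.sum_congr rfl fun i _ => e (i, j)
      _ = ∑ j, ‖a j‖ ^ q * ∑ i, c j i := by
          refine Finset.sum_congr rfl fun j _ => ?_
          rw [Finset.mul_sum]
          exact Finset.sum_congr rfl fun i _ => by rw [hcsymm i j]
      _ ≤ ∑ j, ‖a j‖ ^ q * M := by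
          refine Finset.sum_le_sum fun j _ => ?_
          exact mul_le_mul_of_nonneg_left (hMle j) (Real.rpow_nonneg (norm_nonneg _) _)
      _ = B * M := by rw [hB, Finset.sum_mul]
  have holder := Real.inner_le_Lp_mul_Lq Finset.univ f g hpq'
  have step2 : ∑ x : Fin n × Fin n, f x * g x ≤ A ^ (1/p) * B ^ (1/q) * M := by
    refine holder.trans ?_
    have h1 : (∑ x : Fin n × Fin n, |f x| ^ p) ^ (1/p) ≤ (A * M) ^ (1/p) :=
      Real.rpow_le_rpow (Finset.sum_nonneg fun x _ => Real.rpow_nonneg (abs_nonneg _) _) hfp (by positivity)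
    have h2 : (∑ x : Fin n × Fin n, |g x| ^ q) ^ (1/q) ≤ (B * M) ^ (1/q) :=
      Real.rpow_le_rpow (Finset.sum_nonneg fun x _ => Real.rpow_nonneg (abs_nonneg _) _) hgq (by positivity)
    refine (mul_le_mul h1 h2 (Real.rpow_nonneg (Finset.sum_nonneg fun x _ => Real.rpow_nonneg (abs_nonneg _) _) _) (Real.rpow_nonneg (mul_nonneg hAnn hMnn) _)).trans ?_
    rw [Real.mul_rpow hAnn hMnn, Real.mul_rpow hBnn hMnn]
    rw [show A ^ (1/p) * M ^ (1/p) * (B ^ (1/q) * M ^ (1/q)) = A ^ (1/p) * B ^ (1/q) * (M ^ (1/p) * M ^ (1/q)) by ring]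
    rw [← Real.rpow_add' hMnn (by rw [hpq]; norm_num), hpq, Real.rpow_one]
  calc ‖∑ i, a i • z i‖ ^ 2 ≤ ∑ i, ∑ j, ‖a i‖ * ‖a j‖ * c i j := step1
    _ = ∑ x : Fin n × Fin n, f x * g x := step2a
    _ ≤ A ^ (1/p) * B ^ (1/q) * M := step2
end

section
/- Let n be a positive integer, let z_1, …, z_n be vectors in H, and let α_1, …, α_n be complex numbers. Then ‖∑_{i=1}^n α_i z_i‖^2 ≤ ∑_{i=1}^n |α_i|^2 (∑_{j=1}^n |(z_i, z_j)|). -/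
theorem stmt_10 {H : Type*} [NormedAddCommGroup H] [InnerProductSpace ℂ H]
    {n : ℕ} (hn : 0 < n) (z : Fin n → H) (a : Fin n → ℂ) :
    ‖∑ i, a i • z i‖ ^ 2 ≤ (∑ i, (‖a i‖) ^ 2 * (∑ j, ‖(inner ℂ (z i) (z j) : ℂ)‖)) := by
  set b : Fin n → ℝ := fun i => ‖a i‖ with hb
  set c : Fin n → Fin n → ℝ := fun i j => ‖(inner ℂ (z i) (z j) : ℂ)‖ with hc
  have csymm : ∀ i j, c i j = c j i := by
    intro i j
    simp only [hc]
    rw [← inner_conj_symm (z i) (z j), Complex.norm_conj]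
  have step1 : ‖∑ i, a i • z i‖ ^ 2 ≤ ∑ i, ∑ j, b i * b j * c i j := by
    have h1 : (‖∑ i, a i • z i‖ : ℝ) ^ 2 =
        Complex.re (inner ℂ (∑ i, a i • z i) (∑ i, a i • z i) : ℂ) := by
      exact (inner_self_eq_norm_sq (𝕜 := ℂ) _).symm
    rw [h1]
    have h2 : (inner ℂ (∑ i, a i • z i) (∑ i, a i • z i) : ℂ) =
        ∑ i, ∑ j, (starRingEnd ℂ) (a i) * a j * (inner ℂ (z i) (z j) : ℂ) := by
      rw [sum_inner]
      congr 1; ext i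
      rw [inner_sum]
      congr 1; ext j
      rw [inner_smul_left, inner_smul_right]
      ring
    rw [h2]
    calc Complex.re (∑ i, ∑ j, (starRingEnd ℂ) (a i) * a j * (inner ℂ (z i) (z j) : ℂ))
        ≤ ‖(∑ i, ∑ j, (starRingEnd ℂ) (a i) * a j * (inner ℂ (z i) (z j) : ℂ))‖ :=
          Complex.re_le_norm _
      _ ≤ ∑ i, ∑ j, ‖((starRingEnd ℂ) (a i) * a j * (inner ℂ (z i) (z j) : ℂ))‖ := by
          refine (norm_sum_le _ _).trans ?_
          exact Finset.sum_le_sum fun i _ => norm_sum_le _ _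
      _ = ∑ i, ∑ j, b i * b j * c i j := by
          refine Finset.sum_congr rfl fun i _ => Finset.sum_congr rfl fun j _ => ?_
          simp [hb, hc, map_mul]
  refine step1.trans ?_
  have step2 : ∑ i, ∑ j, b i * b j * c i j ≤ ∑ i, ∑ j, ((b i)^2 + (b j)^2)/2 * c i j := by
    refine Finset.sum_le_sum fun i _ => Finset.sum_le_sum fun j _ => ?_
    have hcnn : 0 ≤ c i j := norm_nonneg _
    have : b i * b j ≤ ((b i)^2 + (b j)^2)/2 := by nlinarith [sq_nonneg (b i - b j)]
    nlinarith
  refine step2.trans ?_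
  have hswap : ∑ i, ∑ j, (b j)^2 * c i j = ∑ i, ∑ j, (b i)^2 * c i j := by
    rw [Finset.sum_comm]
    refine Finset.sum_congr rfl fun i _ => Finset.sum_congr rfl fun j _ => ?_
    rw [csymm]
  have : ∑ i, ∑ j, ((b i)^2 + (b j)^2)/2 * c i j
      = (∑ i, ∑ j, (b i)^2 * c i j + ∑ i, ∑ j, (b j)^2 * c i j) / 2 := by
    rw [← Finset.sum_add_distrib]
    rw [eq_div_iff (by norm_num : (2:ℝ) ≠ 0), Finset.sum_mul]
    refine Finset.sum_congr rfl fun i _ => ?_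
    rw [← Finset.sum_add_distrib, Finset.sum_mul]
    refine Finset.sum_congr rfl fun j _ => ?_
    ring
  rw [this, hswap]
  rw [add_self_div_two]
  apply le_of_eq
  refine Finset.sum_congr rfl fun i _ => ?_
  rw [Finset.mul_sum]
end

section
/- Let n be a positive integer, let x, y_1, …, y_n be vectors in H, let c_1, …, c_n be complex numbers, and let p > 1 and q satisfy 1/p + 1/q = 1. Then |∑_{i=1}^n c_i (x, y_i)|^2 ≤ ‖x‖^2 · (∑_{i=1}^n |c_i|^p (∑_{j=1}^n |(y_i, y_j)|))^{1/p} · (∑_{i=1}^n |c_i|^q (∑_{j=1}^n |(y_i, y_j)|))^{1/q}. -/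
theorem stmt_11 {H : Type*} [NormedAddCommGroup H] [InnerProductSpace ℂ H]
    {n : ℕ} (hn : 0 < n) (x : H) (y : Fin n → H) (c : Fin n → ℂ) (p q : ℝ) (hp : 1 < p) (hpq : 1 / p + 1 / q = 1) :
    (‖(∑ i, c i * (inner ℂ x (y i) : ℂ))‖) ^ 2 ≤ ‖x‖ ^ 2 * (∑ i, (‖(c i)‖) ^ p * (∑ j, ‖((inner ℂ (y i) (y j) : ℂ))‖)) ^ (1 / p) * (∑ i, (‖(c i)‖) ^ q * (∑ j, ‖((inner ℂ (y i) (y j) : ℂ))‖)) ^ (1 / q) := by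
  have hpq' : p.HolderConjugate q := Real.holderConjugate_iff.mpr ⟨hp, by rw [← one_div, ← one_div]; exact hpq⟩
  set v : H := ∑ i, c i • y i with hv
  set a : Fin n → Fin n → ℝ := fun i j => ‖((inner ℂ (y i) (y j) : ℂ))‖ with ha
  have ha_nonneg : ∀ i j, 0 ≤ a i j := fun i j => norm_nonneg _
  have ha_symm : ∀ i j, a i j = a j i := by
    intro i j
    simp only [ha]
    change ‖((inner ℂ (y i) (y j) : ℂ))‖ = ‖((inner ℂ (y j) (y i) : ℂ))‖
    rw [← inner_conj_symm (y j) (y i)]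
    exact (Complex.norm_conj _).symm
  -- Step 1: rewrite sum as inner product
  have h1 : ∑ i, c i * (inner ℂ x (y i) : ℂ) = inner ℂ x v := by
    rw [hv, inner_sum]
    congr 1
    ext i
    rw [inner_smul_right]
  -- Step 2: Cauchy-Schwarz
  have h2 : (‖(inner ℂ x v : ℂ)‖) ^ 2 ≤ ‖x‖ ^ 2 * ‖v‖ ^ 2 := by
    have := norm_inner_le_norm (𝕜 := ℂ) x v
    calc (‖(inner ℂ x v : ℂ)‖) ^ 2 = ‖(inner ℂ x v : ℂ)‖ ^ 2 := rfl
      _ ≤ (‖x‖ * ‖v‖) ^ 2 := by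
          apply pow_le_pow_left₀ (norm_nonneg _) this
      _ = ‖x‖ ^ 2 * ‖v‖ ^ 2 := by ring
  -- Step 3: expand ‖v‖²
  have h3 : ‖v‖ ^ 2 ≤ ∑ i, ∑ j, ‖(c i)‖ * ‖(c j)‖ * a i j := by
    have hvv : (‖v‖ : ℝ) ^ 2 = ‖((inner ℂ v v : ℂ))‖ := by
      rw [inner_self_eq_norm_sq_to_K (𝕜 := ℂ) v]
      simp [sq_abs]
    rw [hvv, hv]
    have : (inner ℂ (∑ i, c i • y i) (∑ j, c j • y j) : ℂ)
        = ∑ i, ∑ j, (starRingEnd ℂ) (c i) * c j * inner ℂ (y i) (y j) := by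
      rw [sum_inner]
      congr 1; ext i
      rw [inner_sum]
      congr 1; ext j
      rw [inner_smul_left, inner_smul_right]; ring
    rw [this]
    calc ‖(∑ i, ∑ j, (starRingEnd ℂ) (c i) * c j * (inner ℂ (y i) (y j) : ℂ))‖
        ≤ ∑ i, ‖(∑ j, (starRingEnd ℂ) (c i) * c j * (inner ℂ (y i) (y j) : ℂ))‖ :=
          norm_sum_le _ _
      _ ≤ ∑ i, ∑ j, ‖(c i)‖ * ‖(c j)‖ * a i j := by
          apply Finset.sum_le_sum
          intro i _
          refine le_trans (norm_sum_le _ _) ?_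
          apply Finset.sum_le_sum
          intro j _
          simp [ha, map_mul]
  -- Step 4: Hölder
  have h4 : ∑ i, ∑ j, ‖(c i)‖ * ‖(c j)‖ * a i j
      ≤ (∑ i, (‖(c i)‖) ^ p * (∑ j, a i j)) ^ (1 / p)
        * (∑ i, (‖(c i)‖) ^ q * (∑ j, a i j)) ^ (1 / q) := by
    have key := Real.inner_le_Lp_mul_Lq_of_nonneg (s := (Finset.univ : Finset (Fin n × Fin n)))
      (f := fun ij => ‖(c ij.1)‖ * (a ij.1 ij.2) ^ (1/p))
      (g := fun ij => ‖(c ij.2)‖ * (a ij.1 ij.2) ^ (1/q)) hpq'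
      (fun i _ => mul_nonneg (norm_nonneg _) (Real.rpow_nonneg (ha_nonneg _ _) _))
      (fun i _ => mul_nonneg (norm_nonneg _) (Real.rpow_nonneg (ha_nonneg _ _) _))
    have e1 : ∀ ij : Fin n × Fin n,
        (‖(c ij.1)‖ * (a ij.1 ij.2) ^ (1/p)) * (‖(c ij.2)‖ * (a ij.1 ij.2) ^ (1/q))
        = ‖(c ij.1)‖ * ‖(c ij.2)‖ * a ij.1 ij.2 := by
      intro ij
      rw [mul_mul_mul_comm, ← Real.rpow_add' (ha_nonneg _ _) (by rw [hpq]; norm_num), hpq,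
        Real.rpow_one]
    have e2 : ∀ ij : Fin n × Fin n,
        (‖(c ij.1)‖ * (a ij.1 ij.2) ^ (1/p)) ^ p = (‖(c ij.1)‖) ^ p * a ij.1 ij.2 := by
      intro ij
      rw [Real.mul_rpow (norm_nonneg _) (Real.rpow_nonneg (ha_nonneg _ _) _),
        ← Real.rpow_mul (ha_nonneg _ _), one_div_mul_cancel hpq'.ne_zero, Real.rpow_one]
    have e3 : ∀ ij : Fin n × Fin n,
        (‖(c ij.2)‖ * (a ij.1 ij.2) ^ (1/q)) ^ q = (‖(c ij.2)‖) ^ q * a ij.1 ij.2 := by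
      intro ij
      rw [Real.mul_rpow (norm_nonneg _) (Real.rpow_nonneg (ha_nonneg _ _) _),
        ← Real.rpow_mul (ha_nonneg _ _)]
      rw [one_div_mul_cancel hpq'.symm.ne_zero, Real.rpow_one]
    calc ∑ i, ∑ j, ‖(c i)‖ * ‖(c j)‖ * a i j
        = ∑ ij : Fin n × Fin n, ‖(c ij.1)‖ * ‖(c ij.2)‖ * a ij.1 ij.2 := by
          rw [Fintype.sum_prod_type]
      _ ≤ (∑ ij : Fin n × Fin n, (‖(c ij.1)‖ * (a ij.1 ij.2) ^ (1/p)) ^ p) ^ (1/p)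
          * (∑ ij : Fin n × Fin n, (‖(c ij.2)‖ * (a ij.1 ij.2) ^ (1/q)) ^ q) ^ (1/q) := by
          refine le_trans (le_of_eq ?_) key
          exact (Finset.sum_congr rfl fun ij _ => (e1 ij)).symm
      _ = (∑ i, (‖(c i)‖) ^ p * (∑ j, a i j)) ^ (1 / p)
          * (∑ i, (‖(c i)‖) ^ q * (∑ j, a i j)) ^ (1 / q) := by
          congr 1
          · congr 1
            rw [Finset.sum_congr rfl fun ij _ => e2 ij, Fintype.sum_prod_type]
            simp [Finset.mul_sum]
          · congr 1
            rw [Finset.sum_congr rfl fun ij _ => e3 ij, Fintype.sum_prod_type, Finset.sum_comm]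
            apply Finset.sum_congr rfl
            intro i _
            rw [Finset.mul_sum]
            apply Finset.sum_congr rfl
            intro j _
            rw [ha_symm j i]
  -- combine
  rw [h1]
  calc (‖(inner ℂ x v : ℂ)‖) ^ 2 ≤ ‖x‖ ^ 2 * ‖v‖ ^ 2 := h2
    _ ≤ ‖x‖ ^ 2 * ((∑ i, (‖(c i)‖) ^ p * (∑ j, a i j)) ^ (1 / p)
        * (∑ i, (‖(c i)‖) ^ q * (∑ j, a i j)) ^ (1 / q)) := by
        apply mul_le_mul_of_nonneg_left (le_trans h3 h4) (by positivity)
    _ = _ := by rw [← mul_assoc]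
end

section
/- Let n be a positive integer, let x, y_1, …, y_n be vectors in H, let c_1, …, c_n be complex numbers, and let p > 1 and q satisfy 1/p + 1/q = 1. Then |∑_{i=1}^n c_i (x, y_i)|^2 ≤ ‖x‖^2 · (∑_{i=1}^n |c_i|^p)^{1/p} · (∑_{i=1}^n |c_i|^q)^{1/q} · max_{1≤i≤n} (∑_{j=1}^n |(y_i, y_j)|). -/
open Finset

theorem stmt_13 {H : Type*} [NormedAddCommGroup H] [InnerProductSpace ℂ H]
    {n : ℕ} (hn : 0 < n) (x : H) (y : Fin n → H) (c : Fin n → ℂ) (p q : ℝ) (hp : 1 < p) (hpq : 1 / p + 1 / q = 1) :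
    ‖∑ i, c i * (inner ℂ x (y i) : ℂ)‖ ^ 2 ≤ ‖x‖ ^ 2 * (∑ i, ‖c i‖ ^ p) ^ (1 / p) * (∑ i, ‖c i‖ ^ q) ^ (1 / q) * (Finset.univ.sup' (Finset.univ_nonempty_iff.mpr (Fin.pos_iff_nonempty.mp hn)) (fun i => (∑ j, ‖(inner ℂ (y i) (y j) : ℂ)‖))) := by
  have hpq' : p.HolderConjugate q := Real.holderConjugate_iff.mpr ⟨hp, by rwa [← one_div, ← one_div]⟩
  have hp1 : 0 ≤ 1 / p := le_of_lt (one_div_pos.mpr hpq'.pos)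
  have hq1 : 0 ≤ 1 / q := le_of_lt (one_div_pos.mpr hpq'.symm.pos)
  have hp0 : p ≠ 0 := hpq'.pos.ne'
  have hq0 : q ≠ 0 := hpq'.symm.pos.ne'
  set a : Fin n → ℝ := fun i => ‖c i‖ with ha
  set A : Fin n → Fin n → ℝ := fun i j => ‖(inner ℂ (y i) (y j) : ℂ)‖ with hA
  have hAnn : ∀ i j, 0 ≤ A i j := fun i j => norm_nonneg _
  have hann : ∀ i, 0 ≤ a i := fun i => norm_nonneg _
  have hAsymm : ∀ i j, A i j = A j i := by
    intro i j
    simp only [hA]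
    exact norm_inner_symm (y i) (y j)
  have ne : (Finset.univ : Finset (Fin n)).Nonempty :=
    Finset.univ_nonempty_iff.mpr (Fin.pos_iff_nonempty.mp hn)
  set M : ℝ := Finset.univ.sup' ne (fun i => ∑ j, A i j) with hM
  have hMnn : 0 ≤ M := by
    obtain ⟨i, hi⟩ := ne
    exact le_trans (Finset.sum_nonneg fun j _ => hAnn i j) (Finset.le_sup' (fun i => ∑ j, A i j) hi)
  have hrow : ∀ i, ∑ j, A i j ≤ M := fun i => Finset.le_sup' (fun i => ∑ j, A i j) (Finset.mem_univ i)
  set z : H := ∑ i, c i • y i with hz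
  set P : ℝ := (∑ i, a i ^ p) ^ (1 / p) with hP
  set Q : ℝ := (∑ i, a i ^ q) ^ (1 / q) with hQ
  have hPnn : 0 ≤ P := Real.rpow_nonneg (Finset.sum_nonneg fun i _ =>
    Real.rpow_nonneg (hann i) _) _
  have hQnn : 0 ≤ Q := Real.rpow_nonneg (Finset.sum_nonneg fun i _ =>
    Real.rpow_nonneg (hann i) _) _
  -- Step 1: the sum is an inner product
  have h1 : (∑ i, c i * (inner ℂ x (y i) : ℂ)) = (inner ℂ x z : ℂ) := by
    rw [hz, inner_sum]
    simp [inner_smul_right]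
  -- Step 2: Cauchy-Schwarz
  have h2 : ‖(inner ℂ x z : ℂ)‖ ≤ ‖x‖ * ‖z‖ := by
    simpa using norm_inner_le_norm (𝕜 := ℂ) x z
  -- Step 3: ‖z‖^2 ≤ ∑ i ∑ j, a i * a j * A i j
  have h3 : ‖z‖ ^ 2 ≤ ∑ i, ∑ j, a i * a j * A i j := by
    have hzz : (‖z‖ : ℝ) ^ 2 = ‖(inner ℂ z z : ℂ)‖ := by
      rw [inner_self_eq_norm_sq_to_K (𝕜 := ℂ) z]
      simp [pow_two, Complex.norm_real, abs_norm]
    rw [hzz, hz]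
    calc ‖(inner ℂ (∑ i, c i • y i) (∑ i, c i • y i) : ℂ)‖
        = ‖(∑ i, ∑ j, (starRingEnd ℂ) (c i) * c j * (inner ℂ (y i) (y j) : ℂ))‖ := by
          rw [sum_inner]
          congr 1
          refine Finset.sum_congr rfl fun i _ => ?_
          rw [inner_sum]
          refine Finset.sum_congr rfl fun j _ => ?_
          rw [inner_smul_left, inner_smul_right]; ring
      _ ≤ ∑ i, ∑ j, a i * a j * A i j := by
          refine le_trans (norm_sum_le _ _) (Finset.sum_le_sum fun i _ => ?_)
          refine le_trans (norm_sum_le _ _) (Finset.sum_le_sum fun j _ => ?_)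
          simp [ha, hA, map_mul]
  -- Step 4: Hölder
  have h4 : ∑ i, ∑ j, a i * a j * A i j ≤ P * Q * M := by
    have hold := Real.inner_le_Lp_mul_Lq_of_nonneg (s := (Finset.univ : Finset (Fin n × Fin n)))
      (f := fun w => a w.1 * A w.1 w.2 ^ (1 / p)) (g := fun w => a w.2 * A w.1 w.2 ^ (1 / q))
      hpq' (fun w _ => mul_nonneg (hann _) (Real.rpow_nonneg (hAnn _ _) _))
      (fun w _ => mul_nonneg (hann _) (Real.rpow_nonneg (hAnn _ _) _))
    have e1 : ∀ w : Fin n × Fin n,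
        (a w.1 * A w.1 w.2 ^ (1 / p)) * (a w.2 * A w.1 w.2 ^ (1 / q)) =
        a w.1 * a w.2 * A w.1 w.2 := by
      intro w
      rw [mul_mul_mul_comm, ← Real.rpow_add_of_nonneg (hAnn _ _) hp1 hq1,
        hpq, Real.rpow_one]
    have e2 : ∀ w : Fin n × Fin n,
        (a w.1 * A w.1 w.2 ^ (1 / p)) ^ p = a w.1 ^ p * A w.1 w.2 := by
      intro w
      rw [Real.mul_rpow (hann _) (Real.rpow_nonneg (hAnn _ _) _),
        ← Real.rpow_mul (hAnn _ _), one_div_mul_cancel hp0, Real.rpow_one]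
    have e3 : ∀ w : Fin n × Fin n,
        (a w.2 * A w.1 w.2 ^ (1 / q)) ^ q = a w.2 ^ q * A w.1 w.2 := by
      intro w
      rw [Real.mul_rpow (hann _) (Real.rpow_nonneg (hAnn _ _) _),
        ← Real.rpow_mul (hAnn _ _), one_div_mul_cancel hq0, Real.rpow_one]
    simp only [e1, e2, e3] at hold
    have bp : ∑ w : Fin n × Fin n, a w.1 ^ p * A w.1 w.2 ≤ (∑ i, a i ^ p) * M := by
      rw [Fintype.sum_prod_type]
      calc ∑ i, ∑ j, a i ^ p * A i j = ∑ i, a i ^ p * ∑ j, A i j := by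
            simp [Finset.mul_sum]
        _ ≤ ∑ i, a i ^ p * M :=
            Finset.sum_le_sum fun i _ =>
              mul_le_mul_of_nonneg_left (hrow i) (Real.rpow_nonneg (hann i) _)
        _ = (∑ i, a i ^ p) * M := by rw [Finset.sum_mul]
    have bq : ∑ w : Fin n × Fin n, a w.2 ^ q * A w.1 w.2 ≤ (∑ i, a i ^ q) * M := by
      rw [Fintype.sum_prod_type_right]
      calc ∑ j, ∑ i, a j ^ q * A i j = ∑ j, a j ^ q * ∑ i, A j i := by
            refine Finset.sum_congr rfl fun j _ => ?_
            rw [Finset.mul_sum]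
            exact Finset.sum_congr rfl fun i _ => by rw [hAsymm i j]
        _ ≤ ∑ j, a j ^ q * M :=
            Finset.sum_le_sum fun j _ =>
              mul_le_mul_of_nonneg_left (hrow j) (Real.rpow_nonneg (hann j) _)
        _ = (∑ i, a i ^ q) * M := by rw [Finset.sum_mul]
    have hrhs : (∑ w : Fin n × Fin n, a w.1 ^ p * A w.1 w.2) ^ (1 / p) *
        (∑ w : Fin n × Fin n, a w.2 ^ q * A w.1 w.2) ^ (1 / q) ≤ P * Q * M := by
      have t1 : (∑ w : Fin n × Fin n, a w.1 ^ p * A w.1 w.2) ^ (1 / p) ≤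
          ((∑ i, a i ^ p) * M) ^ (1 / p) :=
        Real.rpow_le_rpow (Finset.sum_nonneg fun w _ =>
          mul_nonneg (Real.rpow_nonneg (hann _) _) (hAnn _ _)) bp hp1
      have t2 : (∑ w : Fin n × Fin n, a w.2 ^ q * A w.1 w.2) ^ (1 / q) ≤
          ((∑ i, a i ^ q) * M) ^ (1 / q) :=
        Real.rpow_le_rpow (Finset.sum_nonneg fun w _ =>
          mul_nonneg (Real.rpow_nonneg (hann _) _) (hAnn _ _)) bq hq1
      calc (∑ w : Fin n × Fin n, a w.1 ^ p * A w.1 w.2) ^ (1 / p) *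
          (∑ w : Fin n × Fin n, a w.2 ^ q * A w.1 w.2) ^ (1 / q)
          ≤ ((∑ i, a i ^ p) * M) ^ (1 / p) * ((∑ i, a i ^ q) * M) ^ (1 / q) :=
            mul_le_mul t1 t2 (Real.rpow_nonneg (Finset.sum_nonneg fun w _ =>
              mul_nonneg (Real.rpow_nonneg (hann _) _) (hAnn _ _)) _) (by positivity)
        _ = P * Q * M := by
            rw [Real.mul_rpow (Finset.sum_nonneg fun i _ => Real.rpow_nonneg (hann i) _) hMnn,
              Real.mul_rpow (Finset.sum_nonneg fun i _ => Real.rpow_nonneg (hann i) _) hMnn,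
              ← hP, ← hQ, mul_mul_mul_comm,
              ← Real.rpow_add_of_nonneg hMnn hp1 hq1, hpq,
              Real.rpow_one]
    calc ∑ i, ∑ j, a i * a j * A i j
        = ∑ w : Fin n × Fin n, a w.1 * a w.2 * A w.1 w.2 :=
          by rw [Fintype.sum_prod_type]
      _ ≤ (∑ w : Fin n × Fin n, a w.1 ^ p * A w.1 w.2) ^ (1 / p) *
          (∑ w : Fin n × Fin n, a w.2 ^ q * A w.1 w.2) ^ (1 / q) := hold
      _ ≤ P * Q * M := hrhs
  -- Combine
  have final : ‖∑ i, c i * (inner ℂ x (y i) : ℂ)‖ ^ 2 ≤ ‖x‖ ^ 2 * (P * Q * M) := by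
    rw [h1]
    calc ‖(inner ℂ x z : ℂ)‖ ^ 2 ≤ (‖x‖ * ‖z‖) ^ 2 := by
          apply pow_le_pow_left₀ (norm_nonneg _) h2
      _ = ‖x‖ ^ 2 * ‖z‖ ^ 2 := by ring
      _ ≤ ‖x‖ ^ 2 * (P * Q * M) := by
          apply mul_le_mul_of_nonneg_left (le_trans h3 h4) (by positivity)
  calc ‖∑ i, c i * (inner ℂ x (y i) : ℂ)‖ ^ 2 ≤ ‖x‖ ^ 2 * (P * Q * M) := final
    _ = ‖x‖ ^ 2 * P * Q * M := by ring
end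

section
/- Let n be a positive integer, let x, y_1, …, y_n be vectors in H, let c_1, …, c_n be complex numbers, let p > 1 and q satisfy 1/p + 1/q = 1, and let γ > 1 and δ satisfy 1/γ + 1/δ = 1. Then |∑_{i=1}^n c_i (x, y_i)|^2 ≤ ‖x‖^2 · max_{1≤i≤n} |c_i| · (∑_{i=1}^n |c_i|^{γq})^{1/(γq)} · (∑_{i=1}^n ∑_{j=1}^n |(y_i, y_j)|)^{1/p} · (∑_{i=1}^n (∑_{j=1}^n |(y_i, y_j)|)^{δ})^{1/(δq)}. -/
open Finset Real

theorem stmt_14 {H : Type*} [NormedAddCommGroup H] [InnerProductSpace ℂ H]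
    {n : ℕ} (hn : 0 < n) (x : H) (y : Fin n → H) (c : Fin n → ℂ) (p q : ℝ) (hp : 1 < p) (hpq : 1 / p + 1 / q = 1) (g d : ℝ) (hg : 1 < g) (hgd : 1 / g + 1 / d = 1) :
    ‖∑ i, c i * (inner ℂ x (y i) : ℂ)‖ ^ 2 ≤ ‖x‖ ^ 2 * (Finset.univ.sup' (Finset.univ_nonempty_iff.mpr (Fin.pos_iff_nonempty.mp hn)) (fun i => ‖c i‖)) * (∑ i, ‖c i‖ ^ (g * q)) ^ (1 / (g * q)) * (∑ i, ∑ j, ‖(inner ℂ (y i) (y j) : ℂ)‖) ^ (1 / p) * (∑ i, (∑ j, ‖(inner ℂ (y i) (y j) : ℂ)‖) ^ d) ^ (1 / (d * q)) := by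
  have hpq' : Real.HolderConjugate p q := Real.holderConjugate_iff.mpr ⟨hp, by simpa [one_div] using hpq⟩
  have hgd' : Real.HolderConjugate g d := Real.holderConjugate_iff.mpr ⟨hg, by simpa [one_div] using hgd⟩
  have hq0 : 0 < q := hpq'.symm.pos
  have hd0 : 0 < d := hgd'.symm.pos
  set a : Fin n → Fin n → ℝ := fun i j => ‖(inner ℂ (y i) (y j) : ℂ)‖ with ha
  set A : Fin n → ℝ := fun i => ∑ j, a i j with hA
  have hann : ∀ i j, 0 ≤ a i j := fun i j => norm_nonneg _
  have hAnn : ∀ i, 0 ≤ A i := fun i => Finset.sum_nonneg fun j _ => hann i j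
  set M : ℝ := Finset.univ.sup' (Finset.univ_nonempty_iff.mpr (Fin.pos_iff_nonempty.mp hn)) (fun i => ‖c i‖) with hM
  have hMc : ∀ i, ‖c i‖ ≤ M := fun i => Finset.le_sup' (fun i => ‖c i‖) (Finset.mem_univ i)
  have hM0 : 0 ≤ M := le_trans (norm_nonneg _) (hMc ⟨0, hn⟩)
  -- Step 1: Cauchy-Schwarz
  have h1 : (‖∑ i, c i * (inner ℂ x (y i) : ℂ)‖) ^ 2
      ≤ ‖x‖ ^ 2 * ∑ i, ∑ j, ‖c i‖ * ‖c j‖ * a i j := by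
    set z : H := ∑ i, c i • y i with hz
    have hxz : (inner ℂ x z : ℂ) = ∑ i, c i * (inner ℂ x (y i) : ℂ) := by
      simp [hz, inner_sum, inner_smul_right]
    have hzz : (inner ℂ z z : ℂ) = ∑ i, ∑ j, (starRingEnd ℂ) (c i) * (c j * (inner ℂ (y i) (y j) : ℂ)) := by
      simp only [hz, sum_inner, inner_sum, inner_smul_left, inner_smul_right, Finset.mul_sum]
      rw [Finset.sum_comm]
      exact Finset.sum_congr rfl fun i _ => Finset.sum_congr rfl fun j _ => by ring
    have hnormz : ‖z‖ ^ 2 ≤ ∑ i, ∑ j, ‖c i‖ * ‖c j‖ * a i j := by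
      have h0 : (‖z‖ : ℝ) ^ 2 = ‖(inner ℂ z z : ℂ)‖ := by
        rw [inner_self_eq_norm_sq_to_K]
        simp [← Complex.ofReal_pow, sq_nonneg]
      rw [h0, hzz]
      refine le_trans (norm_sum_le _ _) (Finset.sum_le_sum fun i _ => ?_)
      refine le_trans (norm_sum_le _ _) (Finset.sum_le_sum fun j _ => ?_)
      simp [ha, map_mul, mul_assoc]
    calc (‖∑ i, c i * (inner ℂ x (y i) : ℂ)‖) ^ 2
        = ‖(inner ℂ x z : ℂ)‖ ^ 2 := by rw [hxz]
      _ ≤ (‖x‖ * ‖z‖) ^ 2 := by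
          have := norm_inner_le_norm (𝕜 := ℂ) x z
          exact pow_le_pow_left₀ (norm_nonneg _) (by simpa using this) 2
      _ = ‖x‖ ^ 2 * ‖z‖ ^ 2 := by ring
      _ ≤ _ := mul_le_mul_of_nonneg_left hnormz (by positivity)
  -- Step 2
  have h2 : (∑ i, ∑ j, ‖c i‖ * ‖c j‖ * a i j)
      ≤ M * ∑ i, ‖c i‖ * A i := by
    rw [Finset.mul_sum]
    refine Finset.sum_le_sum fun i _ => ?_
    have step : ∑ j, ‖c i‖ * ‖c j‖ * a i j
        ≤ ∑ j, M * (‖c i‖ * a i j) := by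
      refine Finset.sum_le_sum fun j _ => ?_
      have : ‖c i‖ * ‖c j‖ * a i j
          = ‖c j‖ * (‖c i‖ * a i j) := by ring
      rw [this]
      exact mul_le_mul_of_nonneg_right (hMc j)
        (mul_nonneg (norm_nonneg _) (hann i j))
    refine le_trans step (le_of_eq ?_)
    rw [← Finset.mul_sum, ← Finset.mul_sum]
  -- Step 3: Hölder with p, q
  have h3 : (∑ i, ‖c i‖ * A i)
      ≤ (∑ i, A i) ^ (1 / p) * (∑ i, ‖c i‖ ^ q * A i) ^ (1 / q) := by
    have key := Real.inner_le_Lp_mul_Lq_of_nonneg (s := Finset.univ (α := Fin n))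
      (f := fun i => A i ^ (1 / p)) (g := fun i => ‖c i‖ * A i ^ (1 / q)) hpq'
      (fun i _ => Real.rpow_nonneg (hAnn i) _)
      (fun i _ => mul_nonneg (norm_nonneg _) (Real.rpow_nonneg (hAnn i) _))
    have e1 : ∀ i : Fin n, A i ^ (1 / p) * (‖c i‖ * A i ^ (1 / q))
        = ‖c i‖ * A i := by
      intro i
      rw [mul_left_comm, ← Real.rpow_add' (hAnn i) (by rw [hpq]; norm_num), hpq, Real.rpow_one]
    have e2 : ∀ i : Fin n, (A i ^ (1 / p)) ^ p = A i := by
      intro i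
      rw [← Real.rpow_mul (hAnn i), one_div_mul_cancel hpq'.ne_zero, Real.rpow_one]
    have e3 : ∀ i : Fin n, (‖c i‖ * A i ^ (1 / q)) ^ q
        = ‖c i‖ ^ q * A i := by
      intro i
      rw [Real.mul_rpow (norm_nonneg _) (Real.rpow_nonneg (hAnn i) _),
        ← Real.rpow_mul (hAnn i), one_div_mul_cancel hq0.ne', Real.rpow_one]
    calc (∑ i, ‖c i‖ * A i)
        = ∑ i, A i ^ (1 / p) * (‖c i‖ * A i ^ (1 / q)) := by
          exact (Finset.sum_congr rfl fun i _ => e1 i).symm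
      _ ≤ (∑ i, (A i ^ (1 / p)) ^ p) ^ (1 / p) * (∑ i, (‖c i‖ * A i ^ (1 / q)) ^ q) ^ (1 / q) := key
      _ = _ := by
          rw [Finset.sum_congr rfl fun i _ => e2 i, Finset.sum_congr rfl fun i _ => e3 i]
  -- Step 4: Hölder with g, d
  have h4 : (∑ i, ‖c i‖ ^ q * A i)
      ≤ (∑ i, ‖c i‖ ^ (g * q)) ^ (1 / g) * (∑ i, A i ^ d) ^ (1 / d) := by
    have key := Real.inner_le_Lp_mul_Lq_of_nonneg (s := Finset.univ (α := Fin n))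
      (f := fun i => ‖c i‖ ^ q) (g := fun i => A i) hgd'
      (fun i _ => Real.rpow_nonneg (norm_nonneg _) _)
      (fun i _ => hAnn i)
    have e4 : ∀ i : Fin n, (‖c i‖ ^ q) ^ g = ‖c i‖ ^ (g * q) := by
      intro i
      rw [← Real.rpow_mul (norm_nonneg _), mul_comm]
    calc (∑ i, ‖c i‖ ^ q * A i)
        ≤ (∑ i, (‖c i‖ ^ q) ^ g) ^ (1 / g) * (∑ i, A i ^ d) ^ (1 / d) := key
      _ = _ := by rw [Finset.sum_congr rfl fun i _ => e4 i]
  -- Step 5: combine h4 raised to 1/q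
  have h5 : (∑ i, ‖c i‖ ^ q * A i) ^ (1 / q)
      ≤ (∑ i, ‖c i‖ ^ (g * q)) ^ (1 / (g * q)) * (∑ i, A i ^ d) ^ (1 / (d * q)) := by
    have hbnn : (0:ℝ) ≤ ∑ i, ‖c i‖ ^ q * A i :=
      Finset.sum_nonneg fun i _ => mul_nonneg (Real.rpow_nonneg (norm_nonneg _) _) (hAnn i)
    have hcnn : (0:ℝ) ≤ ∑ i, ‖c i‖ ^ (g * q) :=
      Finset.sum_nonneg fun i _ => Real.rpow_nonneg (norm_nonneg _) _
    have hdnn : (0:ℝ) ≤ ∑ i, A i ^ d :=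
      Finset.sum_nonneg fun i _ => Real.rpow_nonneg (hAnn i) _
    calc (∑ i, ‖c i‖ ^ q * A i) ^ (1 / q)
        ≤ ((∑ i, ‖c i‖ ^ (g * q)) ^ (1 / g) * (∑ i, A i ^ d) ^ (1 / d)) ^ (1 / q) :=
          Real.rpow_le_rpow hbnn h4 (by positivity)
      _ = _ := by
          rw [Real.mul_rpow (Real.rpow_nonneg hcnn _) (Real.rpow_nonneg hdnn _),
            ← Real.rpow_mul hcnn, ← Real.rpow_mul hdnn, div_mul_div_comm, div_mul_div_comm]
          norm_num
  -- Assemble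
  have hsum0 : (0:ℝ) ≤ ∑ i, A i := Finset.sum_nonneg fun i _ => hAnn i
  have hABnn : (0:ℝ) ≤ ∑ i, ‖c i‖ * A i :=
    Finset.sum_nonneg fun i _ => mul_nonneg (norm_nonneg _) (hAnn i)
  have final : (∑ i, ∑ j, ‖c i‖ * ‖c j‖ * a i j)
      ≤ M * ((∑ i, ‖c i‖ ^ (g * q)) ^ (1 / (g * q)) * ((∑ i, A i) ^ (1 / p) * (∑ i, A i ^ d) ^ (1 / (d * q)))) := by
    refine le_trans h2 ?_
    refine mul_le_mul_of_nonneg_left ?_ hM0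
    calc (∑ i, ‖c i‖ * A i)
        ≤ (∑ i, A i) ^ (1 / p) * (∑ i, ‖c i‖ ^ q * A i) ^ (1 / q) := h3
      _ ≤ (∑ i, A i) ^ (1 / p) * ((∑ i, ‖c i‖ ^ (g * q)) ^ (1 / (g * q)) * (∑ i, A i ^ d) ^ (1 / (d * q))) :=
          mul_le_mul_of_nonneg_left h5 (Real.rpow_nonneg hsum0 _)
      _ = _ := by ring
  calc (‖∑ i, c i * (inner ℂ x (y i) : ℂ)‖) ^ 2
      ≤ ‖x‖ ^ 2 * ∑ i, ∑ j, ‖c i‖ * ‖c j‖ * a i j := h1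
    _ ≤ ‖x‖ ^ 2 * (M * ((∑ i, ‖c i‖ ^ (g * q)) ^ (1 / (g * q)) * ((∑ i, A i) ^ (1 / p) * (∑ i, A i ^ d) ^ (1 / (d * q))))) :=
        mul_le_mul_of_nonneg_left final (by positivity)
    _ = _ := by rw [hA]; ring
end

section
/- Let n be a positive integer, let x, y_1, …, y_n be vectors in H, let c_1, …, c_n be complex numbers, and let p > 1 and q satisfy 1/p + 1/q = 1. Then |∑_{i=1}^n c_i (x, y_i)|^2 ≤ ‖x‖^2 · max_{1≤i≤n} |c_i| · (∑_{i=1}^n |c_i|^q)^{1/q} · (∑_{i=1}^n ∑_{j=1}^n |(y_i, y_j)|)^{1/p} · (max_{1≤i≤n} ∑_{j=1}^n |(y_i, y_j)|)^{1/q}. -/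
open Finset

theorem stmt_15 {H : Type*} [NormedAddCommGroup H] [InnerProductSpace ℂ H]
    {n : ℕ} (hn : 0 < n) (x : H) (y : Fin n → H) (c : Fin n → ℂ) (p q : ℝ) (hp : 1 < p) (hpq : 1 / p + 1 / q = 1) :
    (‖∑ i, c i * (inner ℂ x (y i) : ℂ)‖) ^ 2 ≤ ‖x‖ ^ 2 * (Finset.univ.sup' (Finset.univ_nonempty_iff.mpr (Fin.pos_iff_nonempty.mp hn)) (fun i => ‖c i‖)) * (∑ i, (‖c i‖) ^ q) ^ (1 / q) * (∑ i, ∑ j, ‖(inner ℂ (y i) (y j) : ℂ)‖) ^ (1 / p) * (Finset.univ.sup' (Finset.univ_nonempty_iff.mpr (Fin.pos_iff_nonempty.mp hn)) (fun i => (∑ j, ‖(inner ℂ (y i) (y j) : ℂ)‖))) ^ (1 / q) := by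
  have hne : (Finset.univ : Finset (Fin n)).Nonempty :=
    Finset.univ_nonempty_iff.mpr (Fin.pos_iff_nonempty.mp hn)
  have hpq' : Real.HolderConjugate p q := Real.holderConjugate_iff.mpr ⟨hp, by rw [← one_div, ← one_div]; exact hpq⟩
  have hp0 : (0:ℝ) < p := hpq'.pos
  have hq0 : (0:ℝ) < q := hpq'.symm.pos
  set S : Fin n → ℝ := fun i => ∑ j, ‖(inner ℂ (y i) (y j) : ℂ)‖ with hS
  have hSnn : ∀ i, 0 ≤ S i := fun i => Finset.sum_nonneg fun j _ => norm_nonneg _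
  set M : ℝ := Finset.univ.sup' hne (fun i => ‖c i‖) with hM
  set MS : ℝ := Finset.univ.sup' hne S with hMS
  obtain ⟨i0, -⟩ := hne
  have hne : (Finset.univ : Finset (Fin n)).Nonempty := ⟨i0, Finset.mem_univ i0⟩
  have hMnn : 0 ≤ M := le_trans (norm_nonneg (c i0))
    (Finset.le_sup' (fun i => ‖c i‖) (Finset.mem_univ i0))
  have hMSnn : 0 ≤ MS := le_trans (hSnn i0) (Finset.le_sup' S (Finset.mem_univ i0))
  set z : H := ∑ i, c i • y i with hz
  -- step 1 : Cauchy-Schwarz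
  have h1 : (‖(∑ i, c i * (inner ℂ x (y i) : ℂ))‖) ^ 2 ≤ ‖x‖ ^ 2 * ‖z‖ ^ 2 := by
    have e1 : (inner ℂ x z : ℂ) = ∑ i, c i * (inner ℂ x (y i) : ℂ) := by
      simp [hz, inner_sum, inner_smul_right]
    rw [← e1]
    calc ‖(inner ℂ x z : ℂ)‖ ^ 2 = ‖(inner ℂ x z : ℂ)‖ ^ 2 := rfl
      _ ≤ (‖x‖ * ‖z‖) ^ 2 := by
          gcongr
          exact norm_inner_le_norm x z
      _ = ‖x‖ ^ 2 * ‖z‖ ^ 2 := by ring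
  -- step 2 : expand ‖z‖²
  have h2 : ‖z‖ ^ 2 ≤ ∑ i, ‖c i‖ * (∑ j, ‖c j‖ * ‖(inner ℂ (y i) (y j) : ℂ)‖) := by
    have e2 : (inner ℂ z z : ℂ) = ∑ i, ∑ j, (starRingEnd ℂ) (c i) * c j * (inner ℂ (y i) (y j) : ℂ) := by
      rw [hz, sum_inner]
      refine Finset.sum_congr rfl fun i _ => ?_
      rw [inner_smul_left, inner_sum, Finset.mul_sum]
      refine Finset.sum_congr rfl fun j _ => ?_
      rw [inner_smul_right]; ring
    calc ‖z‖ ^ 2 = Complex.re (inner ℂ z z : ℂ) := (inner_self_eq_norm_sq (𝕜 := ℂ) z).symm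
      _ ≤ ‖(inner ℂ z z : ℂ)‖ := Complex.re_le_norm _
      _ = ‖(∑ i, ∑ j, (starRingEnd ℂ) (c i) * c j * (inner ℂ (y i) (y j) : ℂ))‖ := by rw [e2]
      _ ≤ ∑ i, ∑ j, ‖(starRingEnd ℂ) (c i) * c j * (inner ℂ (y i) (y j) : ℂ)‖ :=
          le_trans (norm_sum_le _ _) (Finset.sum_le_sum fun i _ => norm_sum_le _ _)
      _ = ∑ i, ‖c i‖ * (∑ j, ‖c j‖ * ‖(inner ℂ (y i) (y j) : ℂ)‖) := by
          simp [norm_mul, Complex.norm_conj, Finset.mul_sum, mul_assoc]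
  -- step 3 : inner sum bound
  have h3 : ∀ i, (∑ j, ‖c j‖ * ‖(inner ℂ (y i) (y j) : ℂ)‖) ≤ M * S i := by
    intro i
    rw [hS, Finset.mul_sum]
    refine Finset.sum_le_sum fun j _ => ?_
    exact mul_le_mul_of_nonneg_right
      (Finset.le_sup' (fun k => ‖c k‖) (Finset.mem_univ j)) (norm_nonneg _)
  -- step 4 : Hölder
  have h4 : ∑ i, ‖c i‖ * (M * S i) ≤
      (∑ i, (M * S i) ^ p) ^ (1/p) * (∑ i, (‖c i‖) ^ q) ^ (1/q) := by
    have := Real.inner_le_Lp_mul_Lq_of_nonneg Finset.univ hpq'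
      (f := fun i => M * S i) (g := fun i => ‖c i‖)
      (fun i _ => mul_nonneg hMnn (hSnn i)) (fun i _ => norm_nonneg _)
    calc ∑ i, ‖c i‖ * (M * S i) = ∑ i, (M * S i) * ‖c i‖ := by
          simp [mul_comm]
      _ ≤ _ := this
  -- step 5 : bound (∑ (M*S i)^p)^(1/p)
  have h5 : (∑ i, (M * S i) ^ p) ^ (1/p) ≤ M * (∑ i, S i) ^ (1/p) * MS ^ (1/q) := by
    have key : ∀ i, (M * S i) ^ p ≤ M ^ p * MS ^ (p - 1) * S i := by
      intro i
      rw [Real.mul_rpow hMnn (hSnn i)]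
      have e : S i ^ p = S i ^ (p - 1) * S i := by
        nth_rewrite 3 [← Real.rpow_one (S i)]
        rw [← Real.rpow_add' (hSnn i) (by simpa using hp0.ne')]
        norm_num
      rw [e, ← mul_assoc]
      refine mul_le_mul_of_nonneg_right (mul_le_mul_of_nonneg_left ?_ (Real.rpow_nonneg hMnn p)) (hSnn i)
      exact Real.rpow_le_rpow (hSnn i) (Finset.le_sup' S (Finset.mem_univ i)) (by linarith)
    have hq' : (p - 1) * (1 / p) = 1 / q := by
      have h := hpq'.sub_one_mul_conj
      field_simp
      nlinarith [h]
    calc (∑ i, (M * S i) ^ p) ^ (1/p) ≤ (∑ i, M ^ p * MS ^ (p - 1) * S i) ^ (1/p) :=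
          Real.rpow_le_rpow (Finset.sum_nonneg fun i _ => Real.rpow_nonneg (mul_nonneg hMnn (hSnn i)) _)
            (Finset.sum_le_sum fun i _ => key i) (by positivity)
      _ = (M ^ p * MS ^ (p-1) * ∑ i, S i) ^ (1/p) := by rw [← Finset.mul_sum]
      _ = M * (∑ i, S i) ^ (1/p) * MS ^ (1/q) := by
          rw [Real.mul_rpow (by positivity) (Finset.sum_nonneg fun i _ => hSnn i),
            Real.mul_rpow (Real.rpow_nonneg hMnn _) (Real.rpow_nonneg hMSnn _),
            ← Real.rpow_mul hMnn, ← Real.rpow_mul hMSnn,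
            mul_one_div_cancel hp0.ne', Real.rpow_one, hq']
          ring
  have hA : 0 ≤ (∑ i, (‖c i‖) ^ q) ^ (1/q) :=
    Real.rpow_nonneg (Finset.sum_nonneg fun i _ => Real.rpow_nonneg (norm_nonneg _) _) _
  have hx2 : (0:ℝ) ≤ ‖x‖ ^ 2 := by positivity
  calc (‖(∑ i, c i * (inner ℂ x (y i) : ℂ))‖) ^ 2
      ≤ ‖x‖ ^ 2 * ‖z‖ ^ 2 := h1
    _ ≤ ‖x‖ ^ 2 * (∑ i, ‖c i‖ * (M * S i)) :=
        mul_le_mul_of_nonneg_left (le_trans h2 (Finset.sum_le_sum fun i _ =>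
          mul_le_mul_of_nonneg_left (h3 i) (norm_nonneg _))) hx2
    _ ≤ ‖x‖ ^ 2 * ((∑ i, (M * S i) ^ p) ^ (1/p) * (∑ i, (‖c i‖) ^ q) ^ (1/q)) :=
        mul_le_mul_of_nonneg_left h4 hx2
    _ ≤ ‖x‖ ^ 2 * ((M * (∑ i, S i) ^ (1/p) * MS ^ (1/q)) * (∑ i, (‖c i‖) ^ q) ^ (1/q)) :=
        mul_le_mul_of_nonneg_left (mul_le_mul_of_nonneg_right h5 hA) hx2
    _ = ‖x‖ ^ 2 * M * (∑ i, (‖c i‖) ^ q) ^ (1/q) * (∑ i, S i) ^ (1/p) * MS ^ (1/q) := by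
        ring
end

section
/- Let n be a positive integer, let x, y_1, …, y_n be vectors in H, and let p > 1 and q satisfy 1/p + 1/q = 1. Then ∑_{i=1}^n |(x, y_i)|^2 ≤ ‖x‖ · (∑_{i=1}^n |(x, y_i)|^p (∑_{j=1}^n |(y_i, y_j)|))^{1/(2p)} · (∑_{i=1}^n |(x, y_i)|^q (∑_{j=1}^n |(y_i, y_j)|))^{1/(2q)}. -/
theorem stmt_16 {H : Type*} [NormedAddCommGroup H] [InnerProductSpace ℂ H]
    {n : ℕ} (hn : 0 < n) (x : H) (y : Fin n → H) (p q : ℝ) (hp : 1 < p) (hpq : 1 / p + 1 / q = 1) :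
    (∑ i, (norm ((inner ℂ x (y i) : ℂ))) ^ 2) ≤ ‖x‖ * (∑ i, (norm ((inner ℂ x (y i) : ℂ))) ^ p * (∑ j, norm ((inner ℂ (y i) (y j) : ℂ)))) ^ (1 / (2 * p)) * (∑ i, (norm ((inner ℂ x (y i) : ℂ))) ^ q * (∑ j, norm ((inner ℂ (y i) (y j) : ℂ)))) ^ (1 / (2 * q)) := by
  have hc : p.HolderConjugate q := Real.holderConjugate_iff.mpr ⟨hp, by rw [← one_div, ← one_div]; exact hpq⟩
  set c : Fin n → ℂ := fun i => inner ℂ x (y i) with hcdef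
  set t : Fin n → Fin n → ℝ := fun i j => norm ((inner ℂ (y i) (y j) : ℂ)) with htdef
  have ht0 : ∀ i j, 0 ≤ t i j := fun i j => norm_nonneg _
  have htsymm : ∀ i j, t i j = t j i := by
    intro i j
    simp only [htdef]
    rw [← inner_conj_symm (y j) (y i), Complex.norm_conj]
  set A : ℝ := ∑ i, (norm (c i)) ^ p * (∑ j, t i j) with hAdef
  set B : ℝ := ∑ i, (norm (c i)) ^ q * (∑ j, t i j) with hBdef
  have hA0 : 0 ≤ A := Finset.sum_nonneg fun i _ => mul_nonneg
    (Real.rpow_nonneg (norm_nonneg _) _) (Finset.sum_nonneg fun j _ => ht0 i j)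
  have hB0 : 0 ≤ B := Finset.sum_nonneg fun i _ => mul_nonneg
    (Real.rpow_nonneg (norm_nonneg _) _) (Finset.sum_nonneg fun j _ => ht0 i j)
  set z : H := ∑ i, (starRingEnd ℂ) (c i) • y i with hzdef
  -- Step 1: ∑ |c i|^2 ≤ ‖x‖ * ‖z‖
  have hxz : (inner ℂ x z : ℂ) = ((∑ i, (norm (c i)) ^ 2 : ℝ) : ℂ) := by
    rw [hzdef, inner_sum]
    push_cast
    refine Finset.sum_congr rfl fun i _ => ?_
    rw [inner_smul_right]
    show (starRingEnd ℂ) (c i) * c i = _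
    rw [mul_comm, Complex.mul_conj, Complex.normSq_eq_norm_sq]
    push_cast; ring
  have h1 : (∑ i, (norm (c i)) ^ 2) ≤ ‖x‖ * ‖z‖ := by
    have h := norm_inner_le_norm (𝕜 := ℂ) x z
    rw [hxz, Complex.norm_real, Real.norm_of_nonneg
      (Finset.sum_nonneg fun i _ => sq_nonneg _)] at h
    exact h
  -- Step 2: ‖z‖^2 ≤ ∑ i, ∑ j, |c i| * |c j| * t i j
  have hn2 : ‖z‖ ^ 2 = norm (inner ℂ z z : ℂ) := by
    rw [@inner_self_eq_norm_sq_to_K ℂ, norm_pow]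
    norm_num
  have hzz : norm (inner ℂ z z : ℂ)
      ≤ ∑ i, ∑ j, norm (c i) * norm (c j) * t i j := by
    rw [hzdef, sum_inner]
    simp only [inner_sum, inner_smul_left, inner_smul_right, starRingEnd_self_apply]
    refine (norm_sum_le _ _).trans (Finset.sum_le_sum fun i _ => ?_)
    refine (norm_sum_le _ _).trans (Finset.sum_le_sum fun j _ => le_of_eq ?_)
    rw [norm_mul, norm_mul, Complex.norm_conj]
    simp only [htdef]
    ring
  -- Step 3: Hölder
  have hold : (∑ i, ∑ j, norm (c i) * norm (c j) * t i j)
      ≤ A ^ (1 / p) * B ^ (1 / q) := by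
    have key := Real.inner_le_Lp_mul_Lq (Finset.univ : Finset (Fin n × Fin n))
      (fun ij => norm (c ij.1) * t ij.1 ij.2 ^ (1 / p))
      (fun ij => norm (c ij.2) * t ij.1 ij.2 ^ (1 / q)) hc
    have e1 : (∑ ij : Fin n × Fin n, (norm (c ij.1) * t ij.1 ij.2 ^ (1 / p)) *
        (norm (c ij.2) * t ij.1 ij.2 ^ (1 / q)))
        = ∑ i, ∑ j, norm (c i) * norm (c j) * t i j := by
      rw [Fintype.sum_prod_type]
      refine Finset.sum_congr rfl fun i _ => Finset.sum_congr rfl fun j _ => ?_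
      have : t i j ^ (1 / p) * t i j ^ (1 / q) = t i j := by
        rw [← Real.rpow_add' (ht0 i j) (by rw [hpq]; norm_num), hpq, Real.rpow_one]
      calc (norm (c i) * t i j ^ (1 / p)) * (norm (c j) * t i j ^ (1 / q))
          = norm (c i) * norm (c j) * (t i j ^ (1 / p) * t i j ^ (1 / q)) := by ring
        _ = norm (c i) * norm (c j) * t i j := by rw [this]
    have e2 : (∑ ij : Fin n × Fin n, |norm (c ij.1) * t ij.1 ij.2 ^ (1 / p)| ^ p) = A := by
      rw [Fintype.sum_prod_type, hAdef]
      refine Finset.sum_congr rfl fun i _ => ?_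
      rw [Finset.mul_sum]
      refine Finset.sum_congr rfl fun j _ => ?_
      rw [abs_of_nonneg (mul_nonneg (norm_nonneg _) (Real.rpow_nonneg (ht0 i j) _)),
        Real.mul_rpow (norm_nonneg _) (Real.rpow_nonneg (ht0 i j) _),
        ← Real.rpow_mul (ht0 i j), one_div, inv_mul_cancel₀ hc.pos.ne', Real.rpow_one]
    have e3 : (∑ ij : Fin n × Fin n, |norm (c ij.2) * t ij.1 ij.2 ^ (1 / q)| ^ q) = B := by
      rw [Fintype.sum_prod_type, Finset.sum_comm, hBdef]
      refine Finset.sum_congr rfl fun j _ => ?_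
      rw [Finset.mul_sum]
      refine Finset.sum_congr rfl fun i _ => ?_
      rw [abs_of_nonneg (mul_nonneg (norm_nonneg _) (Real.rpow_nonneg (ht0 i j) _)),
        Real.mul_rpow (norm_nonneg _) (Real.rpow_nonneg (ht0 i j) _),
        ← Real.rpow_mul (ht0 i j), one_div, inv_mul_cancel₀ hc.symm.pos.ne', Real.rpow_one,
        htsymm i j]
    rw [e1, e2, e3] at key
    exact key
  -- combine
  have hz2 : ‖z‖ ^ 2 ≤ A ^ (1 / p) * B ^ (1 / q) := hn2 ▸ (hzz.trans hold)
  have hzle : ‖z‖ ≤ A ^ (1 / (2 * p)) * B ^ (1 / (2 * q)) := by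
    have h := Real.sqrt_le_sqrt hz2
    rw [Real.sqrt_sq (norm_nonneg z)] at h
    refine h.trans (le_of_eq ?_)
    rw [Real.sqrt_eq_rpow,
      Real.mul_rpow (Real.rpow_nonneg hA0 _) (Real.rpow_nonneg hB0 _),
      ← Real.rpow_mul hA0, ← Real.rpow_mul hB0]
    congr 1 <;> congr 1 <;> field_simp <;> ring
  calc (∑ i, (norm (c i)) ^ 2) ≤ ‖x‖ * ‖z‖ := h1
    _ ≤ ‖x‖ * (A ^ (1 / (2 * p)) * B ^ (1 / (2 * q))) :=
        mul_le_mul_of_nonneg_left hzle (norm_nonneg x)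
    _ = ‖x‖ * A ^ (1 / (2 * p)) * B ^ (1 / (2 * q)) := by ring
end

section
/- Let n be a positive integer, let x, y_1, …, y_n be vectors in H, and let p > 1 and q satisfy 1/p + 1/q = 1. Then ∑_{i=1}^n |(x, y_i)|^2 ≤ ‖x‖ · (∑_{i=1}^n |(x, y_i)|^p)^{1/(2p)} · (∑_{i=1}^n |(x, y_i)|^q)^{1/(2q)} · (max_{1≤i≤n} ∑_{j=1}^n |(y_i, y_j)|)^{1/2}. -/
open Finset

theorem stmt_18 {H : Type*} [NormedAddCommGroup H] [InnerProductSpace ℂ H]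
    {n : ℕ} (hn : 0 < n) (x : H) (y : Fin n → H) (p q : ℝ) (hp : 1 < p) (hpq : 1 / p + 1 / q = 1) :
    (∑ i, ‖(inner ℂ x (y i) : ℂ)‖ ^ 2) ≤ ‖x‖ * (∑ i, ‖(inner ℂ x (y i) : ℂ)‖ ^ p) ^ (1 / (2 * p)) * (∑ i, ‖(inner ℂ x (y i) : ℂ)‖ ^ q) ^ (1 / (2 * q)) * (Finset.univ.sup' (Finset.univ_nonempty_iff.mpr (Fin.pos_iff_nonempty.mp hn)) (fun i => (∑ j, ‖(inner ℂ (y i) (y j) : ℂ)‖))) ^ ((1 : ℝ) / 2) := by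
  have hpq' : Real.HolderConjugate p q := Real.holderConjugate_iff.mpr ⟨hp, by simpa [one_div] using hpq⟩
  have hq : 1 < q := hpq'.symm.lt
  have hp0 : (0:ℝ) < p := hpq'.pos
  have hq0 : (0:ℝ) < q := hpq'.symm.pos
  set a : Fin n → ℝ := fun i => ‖(inner ℂ x (y i) : ℂ)‖ with ha
  set b : Fin n → Fin n → ℝ := fun i j => ‖(inner ℂ (y i) (y j) : ℂ)‖ with hb
  have ha0 : ∀ i, 0 ≤ a i := fun i => norm_nonneg _
  have hb0 : ∀ i j, 0 ≤ b i j := fun i j => norm_nonneg _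
  have hb_symm : ∀ i j, b i j = b j i := by
    intro i j
    simp only [hb]
    rw [← inner_conj_symm (y j) (y i), Complex.norm_conj]
  have hne : (Finset.univ : Finset (Fin n)).Nonempty :=
    Finset.univ_nonempty_iff.mpr (Fin.pos_iff_nonempty.mp hn)
  set M : ℝ := Finset.univ.sup' hne (fun i => ∑ j, b i j) with hM
  have hM_le : ∀ i, (∑ j, b i j) ≤ M := by
    intro i
    rw [hM]
    exact Finset.le_sup' (fun i => ∑ j, b i j) (Finset.mem_univ i)
  obtain ⟨i0, _⟩ := hne
  have hM0 : 0 ≤ M := le_trans (Finset.sum_nonneg fun j _ => hb0 i0 j) (hM_le i0)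
  set A : ℝ := ∑ i, a i ^ p with hA
  set B : ℝ := ∑ i, a i ^ q with hB
  have hA0 : 0 ≤ A := Finset.sum_nonneg fun i _ => Real.rpow_nonneg (ha0 i) _
  have hB0 : 0 ≤ B := Finset.sum_nonneg fun i _ => Real.rpow_nonneg (ha0 i) _
  set z : H := ∑ i, (starRingEnd ℂ) ((inner ℂ x (y i) : ℂ)) • y i with hz
  -- Step A : inner x z = ∑ a i ^ 2
  have hxz : (inner ℂ x z : ℂ) = ((∑ i, a i ^ 2 : ℝ) : ℂ) := by
    rw [hz, inner_sum]
    push_cast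
    refine Finset.sum_congr rfl fun i _ => ?_
    rw [inner_smul_right]
    rw [show ((‖(inner ℂ x (y i) : ℂ)‖ : ℂ)) ^ 2
        = ((‖(inner ℂ x (y i) : ℂ)‖ ^ 2 : ℝ) : ℂ) by push_cast; ring,
      Complex.sq_norm, Complex.normSq_eq_conj_mul_self]
  have hS_nonneg : (0:ℝ) ≤ ∑ i, a i ^ 2 := Finset.sum_nonneg fun i _ => sq_nonneg _
  have stepA : (∑ i, a i ^ 2) ≤ ‖x‖ * ‖z‖ := by
    have h1 : ‖(inner ℂ x z : ℂ)‖ ≤ ‖x‖ * ‖z‖ := norm_inner_le_norm x z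
    rwa [hxz, Complex.norm_real, Real.norm_of_nonneg hS_nonneg] at h1
  -- Step B : ‖z‖ ^ 2 ≤ T
  set T : ℝ := ∑ i, ∑ j, a i * a j * b i j with hT
  have stepB : ‖z‖ ^ 2 ≤ T := by
    have hzz : (inner ℂ z z : ℂ) = ∑ i, ∑ j,
        (inner ℂ x (y i) : ℂ) * (starRingEnd ℂ) ((inner ℂ x (y j) : ℂ)) * (inner ℂ (y i) (y j) : ℂ) := by
      rw [hz, sum_inner]
      refine Finset.sum_congr rfl fun i _ => ?_
      rw [inner_smul_left, inner_sum, Finset.mul_sum]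
      refine Finset.sum_congr rfl fun j _ => ?_
      rw [inner_smul_right, Complex.conj_conj]
      ring
    have h2 : ‖z‖ ^ 2 = ‖(inner ℂ z z : ℂ)‖ := by
      rw [@inner_self_eq_norm_sq_to_K ℂ]; simp
    rw [h2, hzz]
    calc ‖∑ i, ∑ j, (inner ℂ x (y i) : ℂ) * (starRingEnd ℂ) ((inner ℂ x (y j) : ℂ)) * (inner ℂ (y i) (y j) : ℂ)‖
        ≤ ∑ i, ∑ j, ‖(inner ℂ x (y i) : ℂ) * (starRingEnd ℂ) ((inner ℂ x (y j) : ℂ)) * (inner ℂ (y i) (y j) : ℂ)‖ := by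
          refine le_trans (norm_sum_le _ _) (Finset.sum_le_sum fun i _ => norm_sum_le _ _)
      _ = T := by
          refine Finset.sum_congr rfl fun i _ => Finset.sum_congr rfl fun j _ => ?_
          simp only [ha, hb, norm_mul, Complex.norm_conj]
  -- Step C : Hölder
  have stepC : T ≤ M * A ^ (1/p) * B ^ (1/q) := by
    have key : ∑ ij : Fin n × Fin n, (a ij.1 * b ij.1 ij.2 ^ (1/p)) * (a ij.2 * b ij.1 ij.2 ^ (1/q))
        ≤ (∑ ij : Fin n × Fin n, (a ij.1 * b ij.1 ij.2 ^ (1/p)) ^ p) ^ (1/p) *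
          (∑ ij : Fin n × Fin n, (a ij.2 * b ij.1 ij.2 ^ (1/q)) ^ q) ^ (1/q) := by
      exact Real.inner_le_Lp_mul_Lq_of_nonneg Finset.univ hpq'
        (fun ij _ => mul_nonneg (ha0 _) (Real.rpow_nonneg (hb0 _ _) _))
        (fun ij _ => mul_nonneg (ha0 _) (Real.rpow_nonneg (hb0 _ _) _))
    have hT' : T = ∑ ij : Fin n × Fin n, (a ij.1 * b ij.1 ij.2 ^ (1/p)) * (a ij.2 * b ij.1 ij.2 ^ (1/q)) := by
      rw [hT, ← Finset.sum_product']
      refine Finset.sum_congr rfl fun ij _ => ?_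
      have : b ij.1 ij.2 ^ (1/p) * b ij.1 ij.2 ^ (1/q) = b ij.1 ij.2 := by
        rw [← Real.rpow_add' (hb0 _ _) (by rw [hpq]; norm_num), hpq, Real.rpow_one]
      calc a ij.1 * a ij.2 * b ij.1 ij.2
          = a ij.1 * a ij.2 * (b ij.1 ij.2 ^ (1/p) * b ij.1 ij.2 ^ (1/q)) := by rw [this]
        _ = (a ij.1 * b ij.1 ij.2 ^ (1/p)) * (a ij.2 * b ij.1 ij.2 ^ (1/q)) := by ring
    have hfp : ∑ ij : Fin n × Fin n, (a ij.1 * b ij.1 ij.2 ^ (1/p)) ^ p ≤ M * A := by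
      calc ∑ ij : Fin n × Fin n, (a ij.1 * b ij.1 ij.2 ^ (1/p)) ^ p
          = ∑ i, ∑ j, a i ^ p * b i j := by
            rw [← Finset.sum_product']
            refine Finset.sum_congr rfl fun ij _ => ?_
            rw [Real.mul_rpow (ha0 _) (Real.rpow_nonneg (hb0 _ _) _),
              ← Real.rpow_mul (hb0 _ _), one_div, inv_mul_cancel₀ hp0.ne', Real.rpow_one]
        _ = ∑ i, a i ^ p * ∑ j, b i j := by
            refine Finset.sum_congr rfl fun i _ => ?_; rw [Finset.mul_sum]
        _ ≤ ∑ i, a i ^ p * M := Finset.sum_le_sum fun i _ =>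
            mul_le_mul_of_nonneg_left (hM_le i) (Real.rpow_nonneg (ha0 i) _)
        _ = M * A := by rw [hA, ← Finset.sum_mul, mul_comm]
    have hgq : ∑ ij : Fin n × Fin n, (a ij.2 * b ij.1 ij.2 ^ (1/q)) ^ q ≤ M * B := by
      calc ∑ ij : Fin n × Fin n, (a ij.2 * b ij.1 ij.2 ^ (1/q)) ^ q
          = ∑ i, ∑ j, a j ^ q * b i j := by
            rw [← Finset.sum_product']
            refine Finset.sum_congr rfl fun ij _ => ?_
            rw [Real.mul_rpow (ha0 _) (Real.rpow_nonneg (hb0 _ _) _),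
              ← Real.rpow_mul (hb0 _ _), one_div, inv_mul_cancel₀ hq0.ne', Real.rpow_one]
        _ = ∑ j, ∑ i, a j ^ q * b i j := Finset.sum_comm
        _ = ∑ j, a j ^ q * ∑ i, b j i := by
            refine Finset.sum_congr rfl fun j _ => ?_
            rw [Finset.mul_sum]
            exact Finset.sum_congr rfl fun i _ => by rw [hb_symm]
        _ ≤ ∑ j, a j ^ q * M := Finset.sum_le_sum fun j _ =>
            mul_le_mul_of_nonneg_left (hM_le j) (Real.rpow_nonneg (ha0 j) _)
        _ = M * B := by rw [hB, ← Finset.sum_mul, mul_comm]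
    calc T ≤ (∑ ij : Fin n × Fin n, (a ij.1 * b ij.1 ij.2 ^ (1/p)) ^ p) ^ (1/p) *
          (∑ ij : Fin n × Fin n, (a ij.2 * b ij.1 ij.2 ^ (1/q)) ^ q) ^ (1/q) := by
          rw [hT']; exact key
      _ ≤ (M * A) ^ (1/p) * (M * B) ^ (1/q) := by
          refine mul_le_mul (Real.rpow_le_rpow (Finset.sum_nonneg fun ij _ =>
              Real.rpow_nonneg (mul_nonneg (ha0 _) (Real.rpow_nonneg (hb0 _ _) _)) _) hfp
              (by positivity)) (Real.rpow_le_rpow (Finset.sum_nonneg fun ij _ =>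
              Real.rpow_nonneg (mul_nonneg (ha0 _) (Real.rpow_nonneg (hb0 _ _) _)) _) hgq
              (by positivity)) (Real.rpow_nonneg (Finset.sum_nonneg fun ij _ =>
              Real.rpow_nonneg (mul_nonneg (ha0 _) (Real.rpow_nonneg (hb0 _ _) _)) _) _)
            (Real.rpow_nonneg (mul_nonneg hM0 hA0) _)
      _ = M * A ^ (1/p) * B ^ (1/q) := by
          rw [Real.mul_rpow hM0 hA0, Real.mul_rpow hM0 hB0]
          have : M ^ (1/p) * M ^ (1/q) = M := by
            rw [← Real.rpow_add' hM0 (by rw [hpq]; norm_num), hpq, Real.rpow_one]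
          calc M ^ (1/p) * A ^ (1/p) * (M ^ (1/q) * B ^ (1/q))
              = (M ^ (1/p) * M ^ (1/q)) * A ^ (1/p) * B ^ (1/q) := by ring
            _ = M * A ^ (1/p) * B ^ (1/q) := by rw [this]
  -- combine
  have hT0 : 0 ≤ T := Finset.sum_nonneg fun i _ => Finset.sum_nonneg fun j _ =>
    mul_nonneg (mul_nonneg (ha0 i) (ha0 j)) (hb0 i j)
  have hz_le : ‖z‖ ≤ (M * A ^ (1/p) * B ^ (1/q)) ^ ((1:ℝ)/2) := by
    have h1 : ‖z‖ = (‖z‖ ^ 2) ^ ((1:ℝ)/2) := by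
      rw [← Real.rpow_natCast ‖z‖ 2, ← Real.rpow_mul (norm_nonneg z)]
      norm_num
    rw [h1]
    exact Real.rpow_le_rpow (sq_nonneg _) (le_trans stepB stepC) (by norm_num)
  calc (∑ i, a i ^ 2) ≤ ‖x‖ * ‖z‖ := stepA
    _ ≤ ‖x‖ * (M * A ^ (1/p) * B ^ (1/q)) ^ ((1:ℝ)/2) :=
        mul_le_mul_of_nonneg_left hz_le (norm_nonneg x)
    _ = ‖x‖ * A ^ (1/(2*p)) * B ^ (1/(2*q)) * M ^ ((1:ℝ)/2) := by
        rw [Real.mul_rpow (mul_nonneg hM0 (Real.rpow_nonneg hA0 _)) (Real.rpow_nonneg hB0 _),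
          Real.mul_rpow hM0 (Real.rpow_nonneg hA0 _),
          ← Real.rpow_mul hA0, ← Real.rpow_mul hB0]
        rw [show (1/p) * ((1:ℝ)/2) = 1/(2*p) by field_simp,
          show (1/q) * ((1:ℝ)/2) = 1/(2*q) by field_simp]
        ring
end

section
/- Let n be a positive integer, let x, y_1, …, y_n be vectors in H, and let p > 1 and q satisfy 1/p + 1/q = 1. Then (∑_{i=1}^n |(x, y_i)|^2)^2 ≤ ‖x‖^2 · (∑_{i=1}^n |(x, y_i)|^p)^{1/p} · (∑_{i=1}^n |(x, y_i)|^q)^{1/q} · max_{1≤i≤n} (∑_{j=1}^n |(y_i, y_j)|). -/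
open Finset

lemma aux_holder_s19 {n : ℕ} [NeZero n] (a : Fin n → ℝ) (b : Fin n → Fin n → ℝ)
    (ha : ∀ i, 0 ≤ a i) (hb : ∀ i j, 0 ≤ b i j) (hsymm : ∀ i j, b i j = b j i)
    {p q : ℝ} (hpq : p.HolderConjugate q) (M : ℝ) (hM : ∀ i, ∑ j, b i j ≤ M) :
    ∑ i, ∑ j, a i * a j * b i j ≤
      (∑ i, a i ^ p) ^ (1/p) * ((∑ i, a i ^ q) ^ (1/q) * M) := by
  have hq0 : q ≠ 0 := hpq.symm.ne_zero
  have hp0 : p ≠ 0 := hpq.ne_zero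
  have hM0 : 0 ≤ M := le_trans (Finset.sum_nonneg fun j _ => hb 0 j) (hM 0)
  set c : Fin n → ℝ := fun i => ∑ j, a j * b i j with hc
  have hc0 : ∀ i, 0 ≤ c i := fun i => Finset.sum_nonneg fun j _ => mul_nonneg (ha j) (hb i j)
  have step1 : ∑ i, ∑ j, a i * a j * b i j ≤
      (∑ i, a i ^ p) ^ (1/p) * (∑ i, c i ^ q) ^ (1/q) := by
    have h := Real.inner_le_Lp_mul_Lq_of_nonneg Finset.univ hpq (f := a) (g := c)
      (fun i _ => ha i) (fun i _ => hc0 i)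
    simpa [hc, Finset.mul_sum, mul_assoc] using h
  have step2 : ∀ i, c i ≤ (∑ j, a j ^ q * b i j) ^ (1/q) * M ^ (1/p) := by
    intro i
    have h := Real.inner_le_Lp_mul_Lq_of_nonneg Finset.univ hpq.symm
      (f := fun j => a j * b i j ^ (1/q)) (g := fun j => b i j ^ (1/p))
      (fun j _ => mul_nonneg (ha j) (Real.rpow_nonneg (hb i j) _))
      (fun j _ => Real.rpow_nonneg (hb i j) _)
    have e1 : ∀ j, a j * b i j ^ (1/q) * b i j ^ (1/p) = a j * b i j := by
      intro j
      rw [mul_assoc, ← Real.rpow_add' (hb i j) (by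
        rw [one_div, one_div, add_comm, hpq.inv_add_inv_eq_one]; norm_num)]
      rw [one_div, one_div, add_comm, hpq.inv_add_inv_eq_one, Real.rpow_one]
    have e2 : ∀ j, (a j * b i j ^ (1/q)) ^ q = a j ^ q * b i j := by
      intro j
      rw [Real.mul_rpow (ha j) (Real.rpow_nonneg (hb i j) _),
        ← Real.rpow_mul (hb i j), one_div_mul_cancel hq0, Real.rpow_one]
    have e3 : ∀ j, (b i j ^ (1/p)) ^ p = b i j := by
      intro j
      rw [← Real.rpow_mul (hb i j), one_div_mul_cancel hp0, Real.rpow_one]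
    simp only [e1, e2, e3] at h
    have hD' : (0:ℝ) ≤ ∑ j, a j ^ q * b i j :=
      Finset.sum_nonneg fun j _ => mul_nonneg (Real.rpow_nonneg (ha j) _) (hb i j)
    refine h.trans (mul_le_mul_of_nonneg_left ?_ (Real.rpow_nonneg hD' _))
    exact Real.rpow_le_rpow (Finset.sum_nonneg fun j _ => hb i j) (hM i)
      (le_of_lt hpq.one_div_pos)
  have step3 : ∑ i, c i ^ q ≤ M ^ (q/p) * (M * ∑ j, a j ^ q) := by
    have h : ∀ i, c i ^ q ≤ (∑ j, a j ^ q * b i j) * M ^ (q/p) := by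
      intro i
      have hD : 0 ≤ ∑ j, a j ^ q * b i j :=
        Finset.sum_nonneg fun j _ => mul_nonneg (Real.rpow_nonneg (ha j) _) (hb i j)
      have := Real.rpow_le_rpow (hc0 i) (step2 i) hpq.symm.nonneg
      rwa [Real.mul_rpow (Real.rpow_nonneg hD _) (Real.rpow_nonneg hM0 _),
        ← Real.rpow_mul hD, one_div_mul_cancel hq0, Real.rpow_one,
        ← Real.rpow_mul hM0, one_div_mul_eq_div] at this
    calc ∑ i, c i ^ q ≤ ∑ i, (∑ j, a j ^ q * b i j) * M ^ (q/p) :=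
          Finset.sum_le_sum fun i _ => h i
      _ = M ^ (q/p) * ∑ j, a j ^ q * (∑ i, b i j) := by
          rw [← Finset.sum_mul, mul_comm, Finset.sum_comm]
          congr 1; exact Finset.sum_congr rfl fun j _ => by rw [Finset.mul_sum]
      _ ≤ M ^ (q/p) * ∑ j, a j ^ q * M := by
          refine mul_le_mul_of_nonneg_left (Finset.sum_le_sum fun j _ => ?_)
            (Real.rpow_nonneg hM0 _)
          refine mul_le_mul_of_nonneg_left ?_ (Real.rpow_nonneg (ha j) _)
          calc ∑ i, b i j = ∑ i, b j i := Finset.sum_congr rfl fun i _ => hsymm i j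
            _ ≤ M := hM j
      _ = M ^ (q/p) * (M * ∑ j, a j ^ q) := by rw [← Finset.sum_mul, mul_comm (∑ j, a j ^ q) M]
  have step4 : (∑ i, c i ^ q) ^ (1/q) ≤ (∑ i, a i ^ q) ^ (1/q) * M := by
    have hQ : (0:ℝ) ≤ ∑ i, a i ^ q := Finset.sum_nonneg fun i _ => Real.rpow_nonneg (ha i) _
    have hcq : (0:ℝ) ≤ ∑ i, c i ^ q := Finset.sum_nonneg fun i _ => Real.rpow_nonneg (hc0 i) _
    have := Real.rpow_le_rpow hcq step3 hpq.symm.one_div_nonneg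
    refine this.trans (le_of_eq ?_)
    rw [Real.mul_rpow (Real.rpow_nonneg hM0 _) (mul_nonneg hM0 hQ),
      Real.mul_rpow hM0 hQ, ← Real.rpow_mul hM0,
      show q / p * (1/q) = 1/p by field_simp]
    rw [show M ^ (1/p) * (M ^ (1/q) * (∑ i, a i ^ q) ^ (1/q)) =
        (M ^ (1/p) * M ^ (1/q)) * (∑ i, a i ^ q) ^ (1/q) by ring,
      ← Real.rpow_add' hM0 (by rw [one_div, one_div, hpq.inv_add_inv_eq_one]; norm_num),
      one_div, one_div, hpq.inv_add_inv_eq_one, Real.rpow_one, mul_comm]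
  have hP : (0:ℝ) ≤ (∑ i, a i ^ p) ^ (1/p) :=
    Real.rpow_nonneg (Finset.sum_nonneg fun i _ => Real.rpow_nonneg (ha i) _) _
  refine step1.trans ?_
  refine mul_le_mul_of_nonneg_left (step4.trans (le_of_eq ?_)) hP
  ring

theorem stmt_19 {H : Type*} [NormedAddCommGroup H] [InnerProductSpace ℂ H]
    {n : ℕ} (hn : 0 < n) (x : H) (y : Fin n → H) (p q : ℝ) (hp : 1 < p) (hpq : 1 / p + 1 / q = 1) :
    (∑ i, (‖(inner ℂ x (y i) : ℂ)‖) ^ 2) ^ 2 ≤ ‖x‖ ^ 2 * (∑ i, (‖(inner ℂ x (y i) : ℂ)‖) ^ p) ^ (1 / p) * (∑ i, (‖(inner ℂ x (y i) : ℂ)‖) ^ q) ^ (1 / q) * (Finset.univ.sup' (Finset.univ_nonempty_iff.mpr (Fin.pos_iff_nonempty.mp hn)) (fun i => (∑ j, ‖(inner ℂ (y i) (y j) : ℂ)‖))) := by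
  haveI : NeZero n := ⟨hn.ne'⟩
  have hpq' : p.HolderConjugate q := Real.holderConjugate_iff.mpr ⟨hp, by rwa [← one_div, ← one_div]⟩
  set a : Fin n → ℝ := fun i => ‖(inner ℂ x (y i) : ℂ)‖ with ha
  set b : Fin n → Fin n → ℝ := fun i j => ‖(inner ℂ (y i) (y j) : ℂ)‖ with hb
  set M : ℝ := Finset.univ.sup' (Finset.univ_nonempty_iff.mpr (Fin.pos_iff_nonempty.mp hn))
    (fun i => (∑ j, ‖(inner ℂ (y i) (y j) : ℂ)‖)) with hM
  have hsymm : ∀ i j, b i j = b j i := by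
    intro i j
    simp only [hb, ← inner_conj_symm (y i) (y j), Complex.norm_conj]
  have hMle : ∀ i, ∑ j, b i j ≤ M := fun i => Finset.le_sup' (fun i => ∑ j, ‖(inner ℂ (y i) (y j) : ℂ)‖) (Finset.mem_univ i)
  have key := aux_holder_s19 a b (fun i => norm_nonneg _)
    (fun i j => norm_nonneg _) hsymm hpq' M hMle
  -- Cauchy–Schwarz step
  set z : H := ∑ i, (starRingEnd ℂ) (inner ℂ x (y i)) • y i with hz
  have hxz : (inner ℂ x z : ℂ) = ((∑ i, a i ^ 2 : ℝ) : ℂ) := by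
    rw [hz, inner_sum]
    push_cast
    refine Finset.sum_congr rfl fun i _ => ?_
    rw [inner_smul_right, mul_comm, Complex.mul_conj, Complex.normSq_eq_norm_sq]
    push_cast
    rfl
  have hS : (0:ℝ) ≤ ∑ i, a i ^ 2 := Finset.sum_nonneg fun i _ => sq_nonneg _
  have hA : (∑ i, a i ^ 2) ^ 2 ≤ ‖x‖ ^ 2 * ‖z‖ ^ 2 := by
    have h := norm_inner_le_norm (𝕜 := ℂ) x z
    rw [hxz, Complex.norm_real, Real.norm_eq_abs, abs_of_nonneg hS] at h
    calc (∑ i, a i ^ 2) ^ 2 ≤ (‖x‖ * ‖z‖) ^ 2 := pow_le_pow_left₀ hS h 2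
      _ = ‖x‖ ^ 2 * ‖z‖ ^ 2 := by ring
  have hzz : ‖z‖ ^ 2 ≤ ∑ i, ∑ j, a i * a j * b i j := by
    have h1 : (‖z‖:ℝ) ^ 2 = ‖(inner ℂ z z : ℂ)‖ := by
      rw [inner_self_eq_norm_sq_to_K (𝕜 := ℂ)]
      simp [← Complex.ofReal_pow]
    have h2 : (inner ℂ z z : ℂ) =
        ∑ i, ∑ j, (inner ℂ x (y i) : ℂ) * (starRingEnd ℂ) (inner ℂ x (y j)) * inner ℂ (y i) (y j) := by
      rw [hz, sum_inner]
      refine Finset.sum_congr rfl fun i _ => ?_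
      rw [inner_sum]
      refine Finset.sum_congr rfl fun j _ => ?_
      rw [inner_smul_left, inner_smul_right, starRingEnd_self_apply]
      ring
    rw [h1, h2]
    refine (norm_sum_le _ _).trans ?_
    refine Finset.sum_le_sum fun i _ => ?_
    refine (norm_sum_le _ _).trans ?_
    refine Finset.sum_le_sum fun j _ => le_of_eq ?_
    rw [norm_mul, norm_mul, Complex.norm_conj]
  calc (∑ i, a i ^ 2) ^ 2 ≤ ‖x‖ ^ 2 * ‖z‖ ^ 2 := hA
    _ ≤ ‖x‖ ^ 2 * (∑ i, ∑ j, a i * a j * b i j) := by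
        exact mul_le_mul_of_nonneg_left hzz (by positivity)
    _ ≤ ‖x‖ ^ 2 * ((∑ i, a i ^ p) ^ (1/p) * ((∑ i, a i ^ q) ^ (1/q) * M)) := by
        exact mul_le_mul_of_nonneg_left key (by positivity)
    _ = ‖x‖ ^ 2 * (∑ i, a i ^ p) ^ (1/p) * (∑ i, a i ^ q) ^ (1/q) * M := by ring
end
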